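/- arXiv:1806.11033 — 4 statements merged into one kernel-verified Lean document; each statement's English description precedes it below -/
import Mathlib

section
/- Let p be a prime, V a vector space over 𝔽_p, σ : V^{⊗p} → V^{⊗p} the linear cyclic-permutation map determined by σ(v₁ ⊗ ⋯ ⊗ v_p) = v_p ⊗ v₁ ⊗ ⋯ ⊗ v_{p−1}, and N = id + σ + σ² + ⋯ + σ^{p−1}. Then the image of N is contained in the kernel of (id − σ), and the function sending v ∈ V to the class of v ⊗ v ⊗ ⋯ ⊗ v (p factors) in ker(id − σ)/im N is an 𝔽_p-linear bijection from V onto ker(id − σ)/im N. -/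
open TensorProduct PiTensorProduct

section cycAux

open Fin.NatCast

variable {p : ℕ} [NeZero p] {ι : Type*}

private def cyc (g : Fin p → ι) : Fin p → ι := fun i => g (i + 1)

private lemma cyc_iterate (k : ℕ) (g : Fin p → ι) (i : Fin p) :
    (cyc^[k] g) i = g (i + (k : Fin p)) := by
  induction k generalizing g with
  | zero => simp
  | succ k ih =>
    rw [Function.iterate_succ_apply, ih (cyc g)]
    show g (i + (k : Fin p) + 1) = _
    congr 1
    push_cast
    abel

private lemma cyc_iterate_p (g : Fin p → ι) : cyc^[p] g = g := by
  funext i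
  rw [cyc_iterate]
  simp

private lemma cyc_iterate_mod (k : ℕ) (g : Fin p → ι) :
    cyc^[k] g = cyc^[k % p] g := by
  conv_lhs => rw [← Nat.mod_add_div k p]
  rw [Function.iterate_add_apply, Function.iterate_mul,
    Function.iterate_fixed (cyc_iterate_p g)]

private lemma cyc_fix {g : Fin p → ι} (h : cyc g = g) (i : Fin p) : g i = g 0 := by
  have key : ∀ k : ℕ, g (k : Fin p) = g 0 := by
    intro k
    induction k with
    | zero => norm_num
    | succ k ih =>
      have hk := congrFun h (k : Fin p)
      simp only [cyc] at hk
      rw [← ih, ← hk]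
      congr 1
      push_cast
      ring
  conv_lhs => rw [← Fin.cast_val_eq_self i]
  exact key i.val

private lemma cyc_free (hp : p.Prime) {g : Fin p → ι} {k : ℕ} (hk : k % p ≠ 0)
    (h : cyc^[k] g = g) : cyc g = g := by
  have h1 : cyc^[k % p] g = g := by rw [← cyc_iterate_mod]; exact h
  have hcop : Nat.Coprime (k % p) p := by
    rw [Nat.coprime_comm]
    exact (Nat.Prime.coprime_iff_not_dvd hp).mpr
      (fun hdvd => hk (Nat.eq_zero_of_dvd_of_lt hdvd (Nat.mod_lt _ (NeZero.pos p))))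
  obtain ⟨m, -, hm⟩ := Nat.exists_mul_mod_eq_one_of_coprime hcop hp.one_lt
  have h2 : cyc^[(k % p) * m] g = g := by
    rw [Function.iterate_mul]
    exact Function.iterate_fixed h1 m
  rw [cyc_iterate_mod, hm] at h2
  simpa using h2

private lemma aux_mul {p : ℕ} (hp : 0 < p) (k : ℕ) : k * (p - 1) + k = p * k := by
  obtain ⟨q, rfl⟩ : ∃ q, p = q + 1 := ⟨p - 1, by omega⟩
  rw [Nat.add_sub_cancel]
  ring

end cycAux

/-- For a prime `p`, a vector space `V` over `𝔽_p`, the cyclic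
permutation `σ` of the `p`-fold tensor power `V^{⊗p}` and the norm
`N = id + σ + ⋯ + σ^{p-1}`, the image of `N` is contained in the kernel of `id - σ`,
every `v ⊗ ⋯ ⊗ v` lies in this kernel, and `v ↦ [v ⊗ ⋯ ⊗ v]` defines an `𝔽_p`-linear
bijection of `V` with `ker(id - σ)/im N`. -/
theorem stmt1 (p : ℕ) (hp : p.Prime) [NeZero p] (V : Type*) [AddCommGroup V]
    [Module (ZMod p) V]
    (σ : Module.End (ZMod p) (⨂[ZMod p] (_ : Fin p), V))
    (hσ : ∀ v : Fin p → V,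
      σ (tprod (ZMod p) v) = tprod (ZMod p) (fun i => v (i - 1))) :
    LinearMap.range (∑ k ∈ Finset.range p, σ ^ k) ≤ LinearMap.ker (1 - σ) ∧
    (∀ v : V, tprod (ZMod p) (fun _ : Fin p => v) ∈ LinearMap.ker (1 - σ)) ∧
    ∃ g : V →ₗ[ZMod p]
        (↥(LinearMap.ker (1 - σ)) ⧸
          (LinearMap.range (∑ k ∈ Finset.range p, σ ^ k)).comap
            (LinearMap.ker (1 - σ)).subtype),
      (∀ (v : V) (h : tprod (ZMod p) (fun _ : Fin p => v) ∈ LinearMap.ker (1 - σ)),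
        g v = Submodule.Quotient.mk ⟨tprod (ZMod p) (fun _ : Fin p => v), h⟩) ∧
      Function.Bijective g := by
  haveI : Fact p.Prime := ⟨hp⟩
  classical
  let b := Module.Basis.ofVectorSpace (ZMod p) V
  -- the coordinate multilinear map
  let Φ : MultilinearMap (ZMod p) (fun _ : Fin p => V)
      ((Fin p → Module.Basis.ofVectorSpaceIndex (ZMod p) V) →₀ ZMod p) :=
    { toFun := fun v => Finsupp.onFinset
        (Fintype.piFinset fun i => (b.repr (v i)).support)
        (fun f => ∏ i, b.repr (v i) (f i))
        (fun f hf => by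
          rw [Fintype.mem_piFinset]
          intro i
          rw [Finsupp.mem_support_iff]
          exact fun h0 => hf (Finset.prod_eq_zero (Finset.mem_univ i) h0))
      map_update_add' := by
        intro inst v i x y
        ext g
        have H : ∀ z : V, (∏ j, (b.repr (Function.update v i z j)) (g j))
            = (b.repr z) (g i) * ∏ j ∈ Finset.univ.erase i, (b.repr (v j)) (g j) := by
          intro z
          calc (∏ j, (b.repr (Function.update v i z j)) (g j))
              = ∏ j, Function.update (fun j => (b.repr (v j)) (g j)) i ((b.repr z) (g i)) j :=
                Finset.prod_congr rfl fun j _ =>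
                  Function.apply_update (fun j w => (b.repr w) (g j)) v i z j
            _ = _ := by
                rw [Finset.prod_update_of_mem (Finset.mem_univ i)]
                rw [Finset.sdiff_singleton_eq_erase]
        simp only [Finsupp.onFinset_apply, Finsupp.add_apply]
        rw [H (x + y), H x, H y, map_add, Finsupp.add_apply, add_mul]
      map_update_smul' := by
        intro inst v i r x
        ext g
        have H : ∀ z : V, (∏ j, (b.repr (Function.update v i z j)) (g j))
            = (b.repr z) (g i) * ∏ j ∈ Finset.univ.erase i, (b.repr (v j)) (g j) := by
          intro z
          calc (∏ j, (b.repr (Function.update v i z j)) (g j))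
              = ∏ j, Function.update (fun j => (b.repr (v j)) (g j)) i ((b.repr z) (g i)) j :=
                Finset.prod_congr rfl fun j _ =>
                  Function.apply_update (fun j w => (b.repr w) (g j)) v i z j
            _ = _ := by
                rw [Finset.prod_update_of_mem (Finset.mem_univ i)]
                rw [Finset.sdiff_singleton_eq_erase]
        simp only [Finsupp.onFinset_apply, Finsupp.smul_apply]
        rw [H (r • x), H x, map_smul, Finsupp.smul_apply, smul_eq_mul, smul_eq_mul, mul_assoc] }
  let Eto := PiTensorProduct.lift Φ
  have Eto_tprod : ∀ (v : Fin p → V) g, Eto (tprod (ZMod p) v) g = ∏ i, (b.repr (v i)) (g i) := by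
    intro v g
    rw [show Eto (tprod (ZMod p) v) = Φ v from PiTensorProduct.lift.tprod v]
    rfl
  let Einv := Finsupp.linearCombination (ZMod p)
      (fun f : Fin p → Module.Basis.ofVectorSpaceIndex (ZMod p) V => tprod (ZMod p) (fun i => b (f i)))
  have EtoEinv : ∀ c, Eto (Einv c) = c := by
    intro c
    induction c using Finsupp.induction_linear with
    | zero => simp
    | add f g hf hg => rw [map_add, map_add, hf, hg]
    | single f r =>
      ext g
      rw [show Einv (Finsupp.single f r) = r • tprod (ZMod p) (fun i => b (f i)) from
        Finsupp.linearCombination_single _ _ _, map_smul, Finsupp.smul_apply, Eto_tprod]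
      by_cases h : f = g
      · subst h
        simp [Finsupp.single_eq_same]
      · obtain ⟨i, hi⟩ := Function.ne_iff.mp h
        rw [Finset.prod_eq_zero (Finset.mem_univ i) (by simp [Finsupp.single_apply, hi])]
        simp [Finsupp.single_apply, h]
  have EinvEto : ∀ x, Einv (Eto x) = x := by
    intro x
    induction x using PiTensorProduct.induction_on with
    | smul_tprod r v =>
      rw [map_smul, map_smul]
      congr 1
      have h1 : Einv (Eto (tprod (ZMod p) v))
          = ∑ f ∈ Fintype.piFinset (fun i => (b.repr (v i)).support),
              (∏ i, (b.repr (v i)) (f i)) • tprod (ZMod p) (fun i => b (f i)) := by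
        rw [show Eto (tprod (ZMod p) v) = Φ v from PiTensorProduct.lift.tprod v]
        rw [show Einv (Φ v) = (Φ v).sum fun f r => r • tprod (ZMod p) (fun i => b (f i)) from
          Finsupp.linearCombination_apply _ _]
        exact Finsupp.onFinset_sum (fun f hf => by
          rw [Fintype.mem_piFinset]
          intro i
          rw [Finsupp.mem_support_iff]
          exact fun h0 => hf (Finset.prod_eq_zero (Finset.mem_univ i) h0))
          (fun f => zero_smul _ _)
      have h2 : tprod (ZMod p) v
          = ∑ f ∈ Fintype.piFinset (fun i => (b.repr (v i)).support),
              (∏ i, (b.repr (v i)) (f i)) • tprod (ZMod p) (fun i => b (f i)) := by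
        have hv : v = fun i => ∑ j ∈ (b.repr (v i)).support, (b.repr (v i)) j • b j := by
          funext i
          conv_lhs => rw [← b.linearCombination_repr (v i)]
          rw [Finsupp.linearCombination_apply, Finsupp.sum]
        conv_lhs => rw [hv]
        rw [MultilinearMap.map_sum_finset]
        exact Finset.sum_congr rfl fun f _ => (PiTensorProduct.tprod (ZMod p)).map_smul_univ _ _
      rw [h1, ← h2]
    | add x y hx hy => rw [map_add, map_add, hx, hy]
  have Eto_inj : Function.Injective Eto := Function.LeftInverse.injective EinvEto
  -- σ acts as `cyc` on coordinates
  have Ecyc : ∀ (x : ⨂[ZMod p] (_ : Fin p), V) g, Eto (σ x) g = Eto x (cyc g) := by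
    intro x
    induction x using PiTensorProduct.induction_on with
    | smul_tprod r v =>
      intro g
      rw [map_smul, map_smul, hσ, map_smul, Finsupp.smul_apply, Finsupp.smul_apply]
      congr 1
      rw [Eto_tprod, Eto_tprod]
      exact (Fintype.prod_equiv (Equiv.addRight (1 : Fin p))
        (fun j => (b.repr (v j)) (cyc g j))
        (fun i => (b.repr (v (i - 1))) (g i))
        (fun j => by
          show (b.repr (v j)) (g (j + 1)) = (b.repr (v (j + 1 - 1))) (g (j + 1))
          rw [add_sub_cancel_right])).symm
    | add x y hx hy =>
      intro g
      rw [map_add, map_add, map_add, Finsupp.add_apply, Finsupp.add_apply, hx, hy]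
  have Ecyck : ∀ (k : ℕ) (x : ⨂[ZMod p] (_ : Fin p), V) g,
      Eto ((σ ^ k) x) g = Eto x (cyc^[k] g) := by
    intro k
    induction k with
    | zero => intro x g; simp
    | succ k ih =>
      intro x g
      rw [pow_succ, Module.End.mul_apply, ih (σ x) g, Ecyc, Function.iterate_succ_apply']
  have hσp : σ ^ p = 1 := by
    refine LinearMap.ext fun x => Eto_inj (Finsupp.ext fun g => ?_)
    rw [Ecyck, cyc_iterate_p]
    rfl
  have hN0 : (1 - σ) * (∑ k ∈ Finset.range p, σ ^ k) = 0 := by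
    have h := mul_geom_sum σ p
    rw [hσp, sub_self, sub_mul, one_mul, sub_eq_zero] at h
    rw [sub_mul, one_mul, h, sub_self]
  have hrange : LinearMap.range (∑ k ∈ Finset.range p, σ ^ k) ≤ LinearMap.ker (1 - σ) := by
    rintro x ⟨y, rfl⟩
    rw [LinearMap.mem_ker, ← Module.End.mul_apply, hN0, LinearMap.zero_apply]
  have hmem : ∀ v : V, tprod (ZMod p) (fun _ : Fin p => v) ∈ LinearMap.ker (1 - σ) := by
    intro v
    rw [LinearMap.mem_ker, LinearMap.sub_apply, Module.End.one_apply, hσ, sub_eq_zero]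
  refine ⟨hrange, hmem, ?_⟩
  -- the map T : tensor power → V reading off the `constant` coordinates
  let cst : Module.Basis.ofVectorSpaceIndex (ZMod p) V → (Fin p → Module.Basis.ofVectorSpaceIndex (ZMod p) V) :=
    fun j _ => j
  have cst_inj : Function.Injective cst := fun j j' h => congrFun h 0
  let T : (⨂[ZMod p] (_ : Fin p), V) →ₗ[ZMod p] V :=
    (Finsupp.linearCombination (ZMod p) ((b : _ → V))) ∘ₗ
      (Finsupp.lcomapDomain cst cst_inj) ∘ₗ Eto
  have T_apply : ∀ x, T x = Finsupp.linearCombination (ZMod p) ((b : _ → V))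
      (Finsupp.comapDomain cst (Eto x) cst_inj.injOn) := fun x => rfl
  have T_tprod : ∀ v : V, T (tprod (ZMod p) fun _ : Fin p => v) = v := by
    intro v
    rw [T_apply]
    have hc : Finsupp.comapDomain cst (Eto (tprod (ZMod p) fun _ : Fin p => v)) cst_inj.injOn
        = b.repr v := by
      ext j
      rw [Finsupp.comapDomain_apply, Eto_tprod]
      simp only [cst]
      rw [Finset.prod_const, Finset.card_univ, Fintype.card_fin, ZMod.pow_card]
    rw [hc, b.linearCombination_repr]
  have T_N : ∀ y, T ((∑ k ∈ Finset.range p, σ ^ k) y) = 0 := by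
    intro y
    rw [T_apply]
    have hc : Finsupp.comapDomain cst (Eto ((∑ k ∈ Finset.range p, σ ^ k) y)) cst_inj.injOn
        = 0 := by
      ext j
      rw [Finsupp.comapDomain_apply]
      have h1 : Eto ((∑ k ∈ Finset.range p, σ ^ k) y) (cst j)
          = ∑ k ∈ Finset.range p, Eto y (cyc^[k] (cst j)) := by
        rw [LinearMap.sum_apply, map_sum, Finsupp.finset_sum_apply]
        exact Finset.sum_congr rfl fun k _ => Ecyck k y (cst j)
      have hfix : ∀ k : ℕ, cyc^[k] (cst j) = cst j :=
        fun k => Function.iterate_fixed rfl k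
      rw [h1, Finset.sum_congr rfl fun k _ => by rw [hfix k], Finset.sum_const,
        Finset.card_range, nsmul_eq_mul, ZMod.natCast_self, zero_mul]
      rfl
    rw [hc, map_zero]
  -- membership in ker(1-σ) in coordinates
  have hkc : ∀ x, x ∈ LinearMap.ker (1 - σ) → ∀ (k : ℕ) g, Eto x (cyc^[k] g) = Eto x g := by
    intro x hx
    have hσx : σ x = x := by
      have h := LinearMap.mem_ker.mp hx
      rw [LinearMap.sub_apply, Module.End.one_apply, sub_eq_zero] at h
      exact h.symm
    intro k g
    induction k with
    | zero => rfl
    | succ k ih =>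
      rw [Function.iterate_succ_apply', ← Ecyc, hσx, ih]
  -- orbit representatives
  let sd : Setoid (Fin p → Module.Basis.ofVectorSpaceIndex (ZMod p) V) :=
    ⟨fun a c => ∃ k : ℕ, cyc^[k] a = c,
     ⟨fun a => ⟨0, rfl⟩,
      fun {a c} h => by
        obtain ⟨k, hk⟩ := h
        refine ⟨k * (p - 1), ?_⟩
        rw [← hk, ← Function.iterate_add_apply, aux_mul (NeZero.pos p) k,
          Function.iterate_mul]
        exact Function.iterate_fixed (cyc_iterate_p a) k,
      fun {a c e} h1 h2 => by
        obtain ⟨k, hk⟩ := h1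
        obtain ⟨l, hl⟩ := h2
        exact ⟨l + k, by rw [Function.iterate_add_apply, hk, hl]⟩⟩⟩
  let rp : (Fin p → Module.Basis.ofVectorSpaceIndex (ZMod p) V) →
      (Fin p → Module.Basis.ofVectorSpaceIndex (ZMod p) V) := fun g => (Quotient.mk sd g).out
  have rp_rel : ∀ g, ∃ m : ℕ, cyc^[m] (rp g) = g :=
    fun g => Quotient.exact (Quotient.out_eq (Quotient.mk sd g))
  have rp_eq : ∀ a c, (∃ k : ℕ, cyc^[k] a = c) → rp a = rp c :=
    fun a c h => congrArg Quotient.out (Quotient.sound h)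
  -- the crux: kernel elements with vanishing constant coordinates are in the range of N
  have hsub : ∀ x : ⨂[ZMod p] (_ : Fin p), V, x ∈ LinearMap.ker (1 - σ) → T x = 0 →
      x ∈ LinearMap.range (∑ k ∈ Finset.range p, σ ^ k) := by
    intro x hx hT
    have hc0 : ∀ j, Eto x (cst j) = 0 := by
      have hl : Finsupp.comapDomain cst (Eto x) cst_inj.injOn = 0 := by
        rw [T_apply] at hT
        exact linearIndependent_iff.mp b.linearIndependent _ hT
      intro j
      have := DFunLike.congr_fun hl j
      rwa [Finsupp.comapDomain_apply] at this
    let d := (Eto x).filter (fun g => rp g = g)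
    refine ⟨Einv d, ?_⟩
    apply Eto_inj
    ext g
    have hNy : Eto ((∑ k ∈ Finset.range p, σ ^ k) (Einv d)) g
        = ∑ k ∈ Finset.range p, d (cyc^[k] g) := by
      rw [LinearMap.sum_apply, map_sum, Finsupp.finset_sum_apply]
      exact Finset.sum_congr rfl fun k _ => by rw [Ecyck, EtoEinv]
    rw [hNy]
    by_cases hcg : cyc g = g
    · have hg0 : g = cst (g 0) := funext (cyc_fix hcg)
      rw [Finset.sum_congr rfl fun k _ => by rw [Function.iterate_fixed hcg k],
        Finset.sum_const, Finset.card_range, nsmul_eq_mul, ZMod.natCast_self, zero_mul]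
      rw [show Eto x g = 0 from by rw [hg0]; exact hc0 (g 0)]
    · obtain ⟨m, hm⟩ := rp_rel g
      have hk₀ : cyc^[(m * (p - 1)) % p] g = rp g := by
        have h1 : cyc^[m * (p - 1)] g = rp g := by
          conv_lhs => rw [← hm]
          rw [← Function.iterate_add_apply, aux_mul (NeZero.pos p) m, Function.iterate_mul]
          exact Function.iterate_fixed (cyc_iterate_p (rp g)) m
        rw [← h1]
        exact (cyc_iterate_mod _ g).symm
      have hk₀lt : (m * (p - 1)) % p < p := Nat.mod_lt _ (NeZero.pos p)
      rw [Finset.sum_eq_single ((m * (p - 1)) % p)]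
      · rw [hk₀]
        have hrpr : rp (rp g) = rp g := (rp_eq (rp g) g ⟨m, hm⟩).trans rfl
        rw [show d (rp g) = Eto x (rp g) from by simp [d, Finsupp.filter_apply, hrpr]]
        rw [← hm, hkc x hx m (rp g)]
        rw [hm]
      · intro k hk hkne
        by_contra hne
        have hpred : rp (cyc^[k] g) = cyc^[k] g := by
          by_contra hpred
          exact hne (by simp [d, Finsupp.filter_apply, hpred])
        have heq : cyc^[k] g = rp g := by
          rw [← hpred]
          exact (rp_eq g (cyc^[k] g) ⟨k, rfl⟩).symm
        have hfix : cyc^[p - (m * (p - 1)) % p + k] g = g := by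
          rw [Function.iterate_add_apply, heq, ← hk₀, ← Function.iterate_add_apply,
            show p - (m * (p - 1)) % p + (m * (p - 1)) % p = p from
              Nat.sub_add_cancel hk₀lt.le]
          exact cyc_iterate_p g
        have hmod : (p - (m * (p - 1)) % p + k) % p ≠ 0 := by
          have hklt := Finset.mem_range.mp hk
          intro h0
          rcases lt_or_ge (p - (m * (p - 1)) % p + k) p with hlt | hge
          · rw [Nat.mod_eq_of_lt hlt] at h0
            omega
          · rw [Nat.mod_eq_sub_mod hge, Nat.mod_eq_of_lt (by omega)] at h0
            omega
        exact hcg (cyc_free hp hmod hfix)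
      · intro h
        exact absurd (Finset.mem_range.mpr hk₀lt) h
  -- assemble the quotient map
  have hle : (LinearMap.range (∑ k ∈ Finset.range p, σ ^ k)).comap
      (LinearMap.ker (1 - σ)).subtype ≤
      LinearMap.ker (T ∘ₗ (LinearMap.ker (1 - σ)).subtype) := by
    rintro ⟨x, hx⟩ hxQ
    rw [Submodule.mem_comap] at hxQ
    obtain ⟨y, hy⟩ := hxQ
    rw [LinearMap.mem_ker, LinearMap.comp_apply]
    show T x = 0
    rw [show x = (∑ k ∈ Finset.range p, σ ^ k) y from hy.symm]
    exact T_N y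
  let h := Submodule.liftQ _ (T ∘ₗ (LinearMap.ker (1 - σ)).subtype) hle
  have hker : LinearMap.ker h = ⊥ := by
    refine Submodule.ker_liftQ_eq_bot _ _ _ ?_
    rintro ⟨x, hx⟩ hxk
    rw [LinearMap.mem_ker, LinearMap.comp_apply] at hxk
    rw [Submodule.mem_comap]
    exact hsub x hx hxk
  have h_inj : Function.Injective h := by
    rw [← LinearMap.ker_eq_bot]
    exact hker
  have h_surj : Function.Surjective h := by
    intro v
    exact ⟨Submodule.Quotient.mk ⟨tprod (ZMod p) fun _ : Fin p => v, hmem v⟩,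
      by rw [Submodule.liftQ_apply]; exact T_tprod v⟩
  let eH := LinearEquiv.ofBijective h ⟨h_inj, h_surj⟩
  refine ⟨(eH.symm : V →ₗ[ZMod p] _), fun v hv => ?_, eH.symm.bijective⟩
  apply h_inj
  have h1 : h (eH.symm v) = v := by
    have := eH.apply_symm_apply v
    exact this
  have h2 : h (Submodule.Quotient.mk ⟨tprod (ZMod p) fun _ : Fin p => v, hv⟩) = v := by
    rw [Submodule.liftQ_apply]
    exact T_tprod v
  exact h1.trans h2.symm
end

section
/- Let k be a commutative ring and A an ℕ-graded (commutative and cocommutative) Hopf algebra over k. Then A(0) and the connected component A′ = {x ∈ A : (id ⊗ p)(Δ x) = x ⊗ 1} are k-submodules of A closed under multiplication, comultiplication and antipode (so each is a Hopf subalgebra), and the multiplication map A(0) ⊗_k A′ → A, a ⊗ x ↦ a·x, is an isomorphism of Hopf algebras, where A(0) ⊗_k A′ carries the tensor-product Hopf algebra structure. -/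
open TensorProduct

noncomputable section Stmt2Aux

open Coalgebra HopfAlgebra LinearMap

set_option linter.unusedSectionVars false

variable {k A B C : Type*} [CommRing k] [CommRing A] [HopfAlgebra k A]
  [CommRing B] [Algebra k B] [CommRing C] [Algebra k C]

/-- Convolution product of two linear maps out of a Hopf algebra into an algebra. -/
def conv (f g : A →ₗ[k] B) : A →ₗ[k] B :=
  LinearMap.mul' k B ∘ₗ TensorProduct.map f g ∘ₗ Coalgebra.comul

/-- The unit of the convolution algebra. -/
def cunit : A →ₗ[k] B := Algebra.linearMap k B ∘ₗ Coalgebra.counit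

lemma conv_apply (f g : A →ₗ[k] B) (y : A) :
    conv f g y = LinearMap.mul' k B (TensorProduct.map f g (Coalgebra.comul y)) := rfl

lemma conv_repr {ι : Type*} (f g : A →ₗ[k] B) {y : A} (re : Coalgebra.Repr k y ι) :
    conv f g y = ∑ i ∈ re.index, f (re.left i) * g (re.right i) := by
  rw [conv_apply, ← re.eq]
  simp [map_sum]

lemma cunit_apply (y : A) : (cunit : A →ₗ[k] B) y = Coalgebra.counit (R := k) y • 1 := by
  simp [cunit, Algebra.algebraMap_eq_smul_one]

lemma sum_counit_smul {ι : Type*} {y : A} (re : Coalgebra.Repr k y ι) :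
    ∑ i ∈ re.index, Coalgebra.counit (R := k) (re.left i) • re.right i = y := by
  have h := congrArg (TensorProduct.lid k A) (Coalgebra.sum_counit_tmul_eq re)
  simp only [map_sum, TensorProduct.lid_tmul, one_smul] at h
  exact h

lemma sum_smul_counit {ι : Type*} {y : A} (re : Coalgebra.Repr k y ι) :
    ∑ i ∈ re.index, Coalgebra.counit (R := k) (re.right i) • re.left i = y := by
  have h := congrArg (TensorProduct.rid k A) (Coalgebra.sum_tmul_counit_eq re)
  simp only [map_sum, TensorProduct.rid_tmul, one_smul] at h
  exact h

lemma conv_cunit_left (f : A →ₗ[k] B) : conv cunit f = f := by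
  ext y
  have re := Coalgebra.Repr.arbitrary k y
  rw [conv_repr _ _ re]
  calc ∑ i ∈ re.index, cunit (re.left i) * f (re.right i)
      = ∑ i ∈ re.index, f (Coalgebra.counit (R := k) (re.left i) • re.right i) := by
        refine Finset.sum_congr rfl fun i _ => ?_
        rw [cunit_apply, smul_mul_assoc, one_mul, map_smul]
    _ = f y := by rw [← map_sum, _root_.sum_counit_smul re]

lemma conv_cunit_right (f : A →ₗ[k] B) : conv f cunit = f := by
  ext y
  have re := Coalgebra.Repr.arbitrary k y
  rw [conv_repr _ _ re]
  calc ∑ i ∈ re.index, f (re.left i) * cunit (re.right i)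
      = ∑ i ∈ re.index, f (Coalgebra.counit (R := k) (re.right i) • re.left i) := by
        refine Finset.sum_congr rfl fun i _ => ?_
        rw [cunit_apply, mul_smul_comm, mul_one, map_smul]
    _ = f y := by rw [← map_sum, sum_smul_counit re]

lemma conv_assoc (f g h : A →ₗ[k] B) : conv (conv f g) h = conv f (conv g h) := by
  ext y
  have re := Coalgebra.Repr.arbitrary k y
  have t : ∀ i, Coalgebra.Repr k (re.left i) (A × A) := fun i => Coalgebra.Repr.arbitrary k (re.left i)
  have s : ∀ i, Coalgebra.Repr k (re.right i) (A × A) := fun i => Coalgebra.Repr.arbitrary k (re.right i)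
  have key := Coalgebra.sum_map_tmul_tmul_eq (R := k) f g h y (repr := re) (a₁ := t) (a₂ := s)
  apply_fun (LinearMap.mul' k B ∘ₗ LinearMap.lTensor B (LinearMap.mul' k B)) at key
  simp only [map_sum, LinearMap.comp_apply, LinearMap.lTensor_tmul, LinearMap.mul'_apply] at key
  rw [conv_repr _ _ re, conv_repr _ _ re]
  calc ∑ i ∈ re.index, conv f g (re.left i) * h (re.right i)
      = ∑ i ∈ re.index, ∑ j ∈ (t i).index,
          f ((t i).left j) * (g ((t i).right j) * h (re.right i)) := by
        refine Finset.sum_congr rfl fun i _ => ?_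
        rw [conv_repr _ _ (t i), Finset.sum_mul]
        exact Finset.sum_congr rfl fun j _ => mul_assoc _ _ _
    _ = ∑ i ∈ re.index, ∑ j ∈ (s i).index,
          f (re.left i) * (g ((s i).left j) * h ((s i).right j)) := key.symm
    _ = ∑ i ∈ re.index, f (re.left i) * conv g h (re.right i) := by
        refine Finset.sum_congr rfl fun i _ => ?_
        rw [conv_repr _ _ (s i), Finset.mul_sum]

lemma mul'_map_comm (f g : A →ₗ[k] B) (z : A ⊗[k] A) :
    LinearMap.mul' k B (TensorProduct.map g f (TensorProduct.comm k A A z)) =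
      LinearMap.mul' k B (TensorProduct.map f g z) := by
  induction z with
  | zero => simp
  | tmul a b => simp [mul_comm]
  | add u v hu hv => simp only [map_add, hu, hv]

lemma conv_comm
    (hcocomm : ∀ x : A,
      TensorProduct.comm k A A (Coalgebra.comul (R := k) x) = Coalgebra.comul (R := k) x)
    (f g : A →ₗ[k] B) : conv f g = conv g f := by
  ext y
  have : conv g f y = conv f g y := by
    rw [conv_apply, conv_apply]
    conv_lhs => rw [← hcocomm y]
    rw [mul'_map_comm]
  exact this.symm

lemma conv_mul_mul
    (hcocomm : ∀ x : A,
      TensorProduct.comm k A A (Coalgebra.comul (R := k) x) = Coalgebra.comul (R := k) x)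
    (a b c d : A →ₗ[k] B) :
    conv (conv a b) (conv c d) = conv (conv a c) (conv b d) := by
  rw [conv_assoc a b (conv c d), ← conv_assoc b c d, conv_comm hcocomm b c,
    conv_assoc c b d, ← conv_assoc a c (conv b d)]

lemma alghom_mul' (φ : B →ₐ[k] C) (w : B ⊗[k] B) :
    φ (LinearMap.mul' k B w) =
      LinearMap.mul' k C (TensorProduct.map φ.toLinearMap φ.toLinearMap w) := by
  induction w with
  | zero => simp
  | tmul a b => simp
  | add u v hu hv => simp only [map_add, hu, hv]

lemma conv_alghom (φ : B →ₐ[k] C) (f g : A →ₗ[k] B) :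
    φ.toLinearMap ∘ₗ conv f g = conv (φ.toLinearMap ∘ₗ f) (φ.toLinearMap ∘ₗ g) := by
  ext y
  rw [LinearMap.comp_apply, conv_apply, conv_apply, AlgHom.toLinearMap_apply, alghom_mul',
    TensorProduct.map_comp, LinearMap.comp_apply]

lemma cunit_alghom (φ : B →ₐ[k] C) :
    φ.toLinearMap ∘ₗ (cunit : A →ₗ[k] B) = cunit := by
  ext y
  simp [cunit, AlgHom.commutes]

/-- `a ↦ a ⊗ 1`. -/
def ι₁ : A →ₗ[k] A ⊗[k] A :=
  (Algebra.TensorProduct.includeLeft (R := k) (S := k) (A := A) (B := A)).toLinearMap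

/-- `a ↦ 1 ⊗ a`. -/
def ι₂ : A →ₗ[k] A ⊗[k] A :=
  (Algebra.TensorProduct.includeRight (R := k) (A := A) (B := A)).toLinearMap

@[simp] lemma ι₁_apply (x : A) : (ι₁ : A →ₗ[k] A ⊗[k] A) x = x ⊗ₜ 1 := rfl
@[simp] lemma ι₂_apply (x : A) : (ι₂ : A →ₗ[k] A ⊗[k] A) x = 1 ⊗ₜ x := rfl

lemma conv_iota (f g : A →ₗ[k] A) :
    conv (ι₁ ∘ₗ f) (ι₂ ∘ₗ g) = TensorProduct.map f g ∘ₗ (Coalgebra.comul : A →ₗ[k] A ⊗[k] A) := by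
  ext y
  have re := Coalgebra.Repr.arbitrary k y
  rw [conv_repr _ _ re, LinearMap.comp_apply, ← re.eq]
  simp [Algebra.TensorProduct.tmul_mul_tmul]

lemma comul_eq_conv :
    (Coalgebra.comul : A →ₗ[k] A ⊗[k] A) = conv ι₁ ι₂ := by
  have h := conv_iota (k := k) (A := A) LinearMap.id LinearMap.id
  rw [LinearMap.comp_id, LinearMap.comp_id] at h
  rw [h, TensorProduct.map_id, LinearMap.id_comp]

lemma conv_antipode_id :
    conv (HopfAlgebra.antipode (R := k) (A := A)) LinearMap.id = cunit :=
  HopfAlgebra.mul_antipode_rTensor_comul (R := k) (A := A)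

lemma conv_id_antipode :
    conv LinearMap.id (HopfAlgebra.antipode (R := k) (A := A)) = cunit :=
  HopfAlgebra.mul_antipode_lTensor_comul (R := k) (A := A)

lemma antipode_one' : HopfAlgebra.antipode (R := k) (A := A) 1 = 1 := by
  have h := HopfAlgebra.mul_antipode_rTensor_comul_apply (R := k) (A := A) 1
  rw [Bialgebra.comul_one, Algebra.TensorProduct.one_def, Bialgebra.counit_one] at h
  simpa using h

lemma comul_antipode
    (hcocomm : ∀ x : A,
      TensorProduct.comm k A A (Coalgebra.comul (R := k) x) = Coalgebra.comul (R := k) x) :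
    (Coalgebra.comul : A →ₗ[k] A ⊗[k] A) ∘ₗ HopfAlgebra.antipode (R := k) =
      TensorProduct.map (HopfAlgebra.antipode (R := k)) (HopfAlgebra.antipode (R := k)) ∘ₗ
        Coalgebra.comul := by
  set S : A →ₗ[k] A := HopfAlgebra.antipode (R := k) with hS
  set F : A →ₗ[k] A ⊗[k] A := Coalgebra.comul ∘ₗ S with hF
  set G : A →ₗ[k] A ⊗[k] A := TensorProduct.map S S ∘ₗ Coalgebra.comul with hG
  have hGconv : G = conv (ι₁ ∘ₗ S) (ι₂ ∘ₗ S) := (conv_iota S S).symm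
  have hA : conv F Coalgebra.comul = cunit := by
    ext y
    have re := Coalgebra.Repr.arbitrary k y
    rw [conv_repr _ _ re]
    have : ∑ i ∈ re.index, F (re.left i) * Coalgebra.comul (re.right i)
        = Coalgebra.comul (R := k) (∑ i ∈ re.index, S (re.left i) * re.right i) := by
      rw [map_sum]
      exact Finset.sum_congr rfl fun i _ => (Bialgebra.comul_mul _ _).symm
    rw [this, HopfAlgebra.sum_antipode_mul_eq_smul re, map_smul, Bialgebra.comul_one, cunit_apply]
  have c₁ : conv (ι₁ ∘ₗ S) (ι₁ : A →ₗ[k] A ⊗[k] A) = cunit := by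
    have h1 := conv_alghom (Algebra.TensorProduct.includeLeft (R := k) (S := k) (A := A) (B := A))
      S LinearMap.id
    rw [LinearMap.comp_id, conv_antipode_id, cunit_alghom] at h1
    exact h1.symm
  have c₂ : conv (ι₂ ∘ₗ S) (ι₂ : A →ₗ[k] A ⊗[k] A) = cunit := by
    have h1 := conv_alghom (Algebra.TensorProduct.includeRight (R := k) (A := A) (B := A))
      S LinearMap.id
    rw [LinearMap.comp_id, conv_antipode_id, cunit_alghom] at h1
    exact h1.symm
  have hB : conv G Coalgebra.comul = cunit := by
    rw [hGconv, comul_eq_conv, conv_mul_mul hcocomm, c₁, c₂, conv_cunit_left]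
  calc F = conv F cunit := (conv_cunit_right F).symm
    _ = conv F (conv G Coalgebra.comul) := by rw [hB]
    _ = conv F (conv Coalgebra.comul G) := by rw [conv_comm hcocomm G]
    _ = conv (conv F Coalgebra.comul) G := (conv_assoc _ _ _).symm
    _ = conv cunit G := by rw [hA]
    _ = G := conv_cunit_left G


section Graded

variable (𝒜 : ℕ → Submodule k A) [DirectSum.Decomposition 𝒜]

/-- The projection of `A` onto `𝒜 0`, valued in the submodule. -/
def pr0 : A →ₗ[k] 𝒜 0 :=
  (DirectSum.component k ℕ (fun i => ↥(𝒜 i)) 0) ∘ₗ (DirectSum.decomposeLinearEquiv 𝒜).toLinearMap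

/-- The projection of `A` onto the degree-zero component. -/
def prj : A →ₗ[k] A := (𝒜 0).subtype ∘ₗ pr0 𝒜

lemma prj_apply (x : A) : prj 𝒜 x = ↑(DirectSum.decompose 𝒜 x 0) := rfl

lemma prj_mem (x : A) : prj 𝒜 x ∈ 𝒜 0 := (DirectSum.decompose 𝒜 x 0).2

lemma prj_of_mem {x : A} (h : x ∈ 𝒜 0) : prj 𝒜 x = x := by
  rw [prj_apply, DirectSum.decompose_of_mem_same 𝒜 h]

lemma prj_of_mem_ne {x : A} {n : ℕ} (h : x ∈ 𝒜 n) (hn : n ≠ 0) : prj 𝒜 x = 0 := by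
  rw [prj_apply]
  exact DirectSum.decompose_of_mem_ne 𝒜 h hn

lemma prj_mul (hgrmul : ∀ i j : ℕ, ∀ x ∈ 𝒜 i, ∀ y ∈ 𝒜 j, x * y ∈ 𝒜 (i + j)) (x y : A) :
    prj 𝒜 (x * y) = prj 𝒜 x * prj 𝒜 y := by
  revert y
  refine DirectSum.Decomposition.inductionOn 𝒜
    (motive := fun x => ∀ y : A, prj 𝒜 (x * y) = prj 𝒜 x * prj 𝒜 y) ?_ ?_ ?_ x
  · intro y; simp
  · intro i m
    refine DirectSum.Decomposition.inductionOn 𝒜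
      (motive := fun y => prj 𝒜 (↑m * y) = prj 𝒜 ↑m * prj 𝒜 y) ?_ ?_ ?_
    · simp
    · intro j m'
      by_cases hi : i = 0
      · subst hi
        by_cases hj : j = 0
        · subst hj
          rw [prj_of_mem 𝒜 m.2, prj_of_mem 𝒜 m'.2,
            prj_of_mem 𝒜 (by simpa using hgrmul 0 0 _ m.2 _ m'.2)]
        · rw [prj_of_mem_ne 𝒜 m'.2 hj, mul_zero,
            prj_of_mem_ne 𝒜 (hgrmul 0 j _ m.2 _ m'.2) (by omega)]
      · rw [prj_of_mem_ne 𝒜 m.2 hi, zero_mul,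
          prj_of_mem_ne 𝒜 (hgrmul i j _ m.2 _ m'.2) (by omega)]
    · intro a b ha hb
      rw [mul_add, map_add, ha, hb, map_add, mul_add]
  · intro a b ha hb y
    rw [add_mul, map_add, ha, hb, map_add, add_mul]

lemma prj_one (hone : (1 : A) ∈ 𝒜 0) : prj 𝒜 1 = 1 := prj_of_mem 𝒜 hone

lemma counit_prj (hcounit : ∀ n : ℕ, 0 < n → ∀ x ∈ 𝒜 n, Coalgebra.counit (R := k) x = 0)
    (x : A) : Coalgebra.counit (R := k) (prj 𝒜 x) = Coalgebra.counit (R := k) x := by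
  refine DirectSum.Decomposition.inductionOn 𝒜
    (motive := fun x => Coalgebra.counit (R := k) (prj 𝒜 x) = Coalgebra.counit (R := k) x)
    ?_ ?_ ?_ x
  · simp
  · intro i m
    by_cases hi : i = 0
    · subst hi; rw [prj_of_mem 𝒜 m.2]
    · rw [prj_of_mem_ne 𝒜 m.2 hi, map_zero,
        hcounit i (Nat.pos_of_ne_zero hi) _ m.2]
  · intro a b ha hb
    rw [map_add, map_add, map_add, ha, hb]

lemma prj_antipode (hgrS : ∀ n : ℕ, ∀ x ∈ 𝒜 n, HopfAlgebra.antipode (R := k) x ∈ 𝒜 n)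
    (x : A) : prj 𝒜 (HopfAlgebra.antipode (R := k) x)
      = HopfAlgebra.antipode (R := k) (prj 𝒜 x) := by
  refine DirectSum.Decomposition.inductionOn 𝒜
    (motive := fun x => prj 𝒜 (HopfAlgebra.antipode (R := k) x)
      = HopfAlgebra.antipode (R := k) (prj 𝒜 x)) ?_ ?_ ?_ x
  · simp
  · intro i m
    by_cases hi : i = 0
    · subst hi; rw [prj_of_mem 𝒜 m.2, prj_of_mem 𝒜 (hgrS 0 _ m.2)]
    · rw [prj_of_mem_ne 𝒜 m.2 hi, prj_of_mem_ne 𝒜 (hgrS i _ m.2) hi, map_zero]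
  · intro a b ha hb
    simp only [map_add, ha, hb]

lemma comul_mem_A0
    (hcomul : ∀ n : ℕ, ∀ x ∈ 𝒜 n, Coalgebra.comul (R := k) x ∈
      ⨆ (ij : ℕ × ℕ) (_ : ij.1 + ij.2 = n),
        LinearMap.range (TensorProduct.map (𝒜 ij.1).subtype (𝒜 ij.2).subtype))
    {x : A} (hx : x ∈ 𝒜 0) :
    Coalgebra.comul (R := k) x ∈
      LinearMap.range (TensorProduct.map (𝒜 0).subtype (𝒜 0).subtype) := by
  have hle : (⨆ (ij : ℕ × ℕ) (_ : ij.1 + ij.2 = 0),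
      LinearMap.range (TensorProduct.map (𝒜 ij.1).subtype (𝒜 ij.2).subtype)) ≤
      LinearMap.range (TensorProduct.map (𝒜 0).subtype (𝒜 0).subtype) := by
    refine iSup_le fun ij => iSup_le fun hij => ?_
    obtain ⟨i, j⟩ := ij
    obtain ⟨rfl, rfl⟩ : i = 0 ∧ j = 0 := by omega
    exact le_refl _
  exact hle (hcomul 0 x hx)

lemma comul_prj
    (hcomul : ∀ n : ℕ, ∀ x ∈ 𝒜 n, Coalgebra.comul (R := k) x ∈
      ⨆ (ij : ℕ × ℕ) (_ : ij.1 + ij.2 = n),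
        LinearMap.range (TensorProduct.map (𝒜 ij.1).subtype (𝒜 ij.2).subtype))
    (x : A) : TensorProduct.map (prj 𝒜) (prj 𝒜) (Coalgebra.comul (R := k) x)
      = Coalgebra.comul (R := k) (prj 𝒜 x) := by
  refine DirectSum.Decomposition.inductionOn 𝒜
    (motive := fun x => TensorProduct.map (prj 𝒜) (prj 𝒜) (Coalgebra.comul (R := k) x)
      = Coalgebra.comul (R := k) (prj 𝒜 x)) ?_ ?_ ?_ x
  · simp
  · intro i m
    by_cases hi : i = 0
    · subst hi
      rw [prj_of_mem 𝒜 m.2]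
      obtain ⟨t, ht⟩ := comul_mem_A0 𝒜 hcomul m.2
      rw [← ht, ← LinearMap.comp_apply, ← TensorProduct.map_comp]
      have hps : (prj 𝒜) ∘ₗ (𝒜 0).subtype = (𝒜 0).subtype :=
        LinearMap.ext fun a => prj_of_mem 𝒜 a.2
      rw [hps]
    · rw [prj_of_mem_ne 𝒜 m.2 hi, map_zero]
      have hsup : (⨆ (ij : ℕ × ℕ) (_ : ij.1 + ij.2 = i),
          LinearMap.range (TensorProduct.map (𝒜 ij.1).subtype (𝒜 ij.2).subtype)) ≤
          LinearMap.ker (TensorProduct.map (prj 𝒜) (prj 𝒜)) := by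
        refine iSup_le fun ij => iSup_le fun hij => ?_
        rintro u ⟨t, rfl⟩
        rw [LinearMap.mem_ker, ← LinearMap.comp_apply, ← TensorProduct.map_comp]
        have : ij.1 ≠ 0 ∨ ij.2 ≠ 0 := by omega
        cases this with
        | inl h1 =>
          have hz : (prj 𝒜) ∘ₗ (𝒜 ij.1).subtype = 0 :=
            LinearMap.ext fun a => prj_of_mem_ne 𝒜 a.2 h1
          rw [hz, TensorProduct.map_zero_left]
          simp
        | inr h2 =>
          have hz : (prj 𝒜) ∘ₗ (𝒜 ij.2).subtype = 0 :=
            LinearMap.ext fun a => prj_of_mem_ne 𝒜 a.2 h2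
          rw [hz, TensorProduct.map_zero_right]
          simp
      exact LinearMap.mem_ker.mp (hsup (hcomul i _ m.2))
  · intro a b ha hb
    simp only [map_add, ha, hb]

lemma comul_comp_prj
    (hcomul : ∀ n : ℕ, ∀ x ∈ 𝒜 n, Coalgebra.comul (R := k) x ∈
      ⨆ (ij : ℕ × ℕ) (_ : ij.1 + ij.2 = n),
        LinearMap.range (TensorProduct.map (𝒜 ij.1).subtype (𝒜 ij.2).subtype)) :
    (Coalgebra.comul : A →ₗ[k] A ⊗[k] A) ∘ₗ prj 𝒜
      = TensorProduct.map (prj 𝒜) (prj 𝒜) ∘ₗ Coalgebra.comul :=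
  LinearMap.ext fun x => (comul_prj 𝒜 hcomul x).symm

lemma counit_comp_prj
    (hcounit : ∀ n : ℕ, 0 < n → ∀ x ∈ 𝒜 n, Coalgebra.counit (R := k) x = 0) :
    (Coalgebra.counit : A →ₗ[k] k) ∘ₗ prj 𝒜 = Coalgebra.counit :=
  LinearMap.ext fun x => counit_prj 𝒜 hcounit x

end Graded


section Core

variable (𝒜 : ℕ → Submodule k A) [DirectSum.Decomposition 𝒜]

/-- `(id ⊗ p) ∘ Δ`. -/
def rho : A →ₗ[k] A ⊗[k] A := LinearMap.lTensor A (prj 𝒜) ∘ₗ Coalgebra.comul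

/-- The connected component of the unit. -/
def Aconn : Submodule k A := LinearMap.ker (rho 𝒜 - ι₁)

lemma mem_Aconn_iff (x : A) : x ∈ Aconn 𝒜 ↔
    LinearMap.lTensor A (prj 𝒜) (Coalgebra.comul (R := k) x) = x ⊗ₜ[k] (1 : A) := by
  rw [Aconn, LinearMap.mem_ker, LinearMap.sub_apply, sub_eq_zero]
  exact Iff.rfl

/-- The projection `P : x ↦ ∑ S(p x₁) x₂` onto the connected component. -/
def Pmap : A →ₗ[k] A :=
  conv (HopfAlgebra.antipode (R := k) ∘ₗ prj 𝒜) LinearMap.id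

lemma conv_Sprj_prj
    (hcomul : ∀ n : ℕ, ∀ x ∈ 𝒜 n, Coalgebra.comul (R := k) x ∈
      ⨆ (ij : ℕ × ℕ) (_ : ij.1 + ij.2 = n),
        LinearMap.range (TensorProduct.map (𝒜 ij.1).subtype (𝒜 ij.2).subtype))
    (hcounit : ∀ n : ℕ, 0 < n → ∀ x ∈ 𝒜 n, Coalgebra.counit (R := k) x = 0) :
    conv (HopfAlgebra.antipode (R := k) ∘ₗ prj 𝒜) (prj 𝒜) = (cunit : A →ₗ[k] A) := by
  ext x
  have h1 : TensorProduct.map (HopfAlgebra.antipode (R := k) ∘ₗ prj 𝒜) (prj 𝒜)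
      = TensorProduct.map (HopfAlgebra.antipode (R := k)) LinearMap.id
        ∘ₗ TensorProduct.map (prj 𝒜) (prj 𝒜) := by
    rw [← TensorProduct.map_comp, LinearMap.id_comp]
  rw [conv_apply, h1, LinearMap.comp_apply, comul_prj 𝒜 hcomul x, ← conv_apply, conv_antipode_id,
    cunit_apply, cunit_apply, counit_prj 𝒜 hcounit x]

lemma conv_prj_Sprj
    (hcomul : ∀ n : ℕ, ∀ x ∈ 𝒜 n, Coalgebra.comul (R := k) x ∈
      ⨆ (ij : ℕ × ℕ) (_ : ij.1 + ij.2 = n),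
        LinearMap.range (TensorProduct.map (𝒜 ij.1).subtype (𝒜 ij.2).subtype))
    (hcounit : ∀ n : ℕ, 0 < n → ∀ x ∈ 𝒜 n, Coalgebra.counit (R := k) x = 0) :
    conv (prj 𝒜) (HopfAlgebra.antipode (R := k) ∘ₗ prj 𝒜) = (cunit : A →ₗ[k] A) := by
  ext x
  have h1 : TensorProduct.map (prj 𝒜) (HopfAlgebra.antipode (R := k) ∘ₗ prj 𝒜)
      = TensorProduct.map LinearMap.id (HopfAlgebra.antipode (R := k))
        ∘ₗ TensorProduct.map (prj 𝒜) (prj 𝒜) := by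
    rw [← TensorProduct.map_comp, LinearMap.id_comp]
  rw [conv_apply, h1, LinearMap.comp_apply, comul_prj 𝒜 hcomul x, ← conv_apply, conv_id_antipode,
    cunit_apply, cunit_apply, counit_prj 𝒜 hcounit x]

/-- `prj` as an algebra homomorphism. -/
def prjA (hone : (1 : A) ∈ 𝒜 0)
    (hgrmul : ∀ i j : ℕ, ∀ x ∈ 𝒜 i, ∀ y ∈ 𝒜 j, x * y ∈ 𝒜 (i + j)) : A →ₐ[k] A :=
  AlgHom.ofLinearMap (prj 𝒜) (prj_one 𝒜 hone) (prj_mul 𝒜 hgrmul)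

/-- `id ⊗ prj` as an algebra homomorphism. -/
def mapA (hone : (1 : A) ∈ 𝒜 0)
    (hgrmul : ∀ i j : ℕ, ∀ x ∈ 𝒜 i, ∀ y ∈ 𝒜 j, x * y ∈ 𝒜 (i + j)) :
    A ⊗[k] A →ₐ[k] A ⊗[k] A :=
  Algebra.TensorProduct.map (AlgHom.id k A) (prjA 𝒜 hone hgrmul)

lemma mapA_toLinearMap (hone : (1 : A) ∈ 𝒜 0)
    (hgrmul : ∀ i j : ℕ, ∀ x ∈ 𝒜 i, ∀ y ∈ 𝒜 j, x * y ∈ 𝒜 (i + j)) :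
    (mapA 𝒜 hone hgrmul).toLinearMap = LinearMap.lTensor A (prj 𝒜) := by
  apply TensorProduct.ext'
  intro x y
  simp [mapA, prjA]

lemma rho_eq_conv : rho 𝒜 = conv ι₁ (ι₂ ∘ₗ prj 𝒜) := by
  have h := conv_iota (k := k) LinearMap.id (prj 𝒜)
  rw [LinearMap.comp_id] at h
  exact h.symm

lemma rho_comp_Sprj
    (hcocomm : ∀ x : A,
      TensorProduct.comm k A A (Coalgebra.comul (R := k) x) = Coalgebra.comul (R := k) x)
    (hcomul : ∀ n : ℕ, ∀ x ∈ 𝒜 n, Coalgebra.comul (R := k) x ∈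
      ⨆ (ij : ℕ × ℕ) (_ : ij.1 + ij.2 = n),
        LinearMap.range (TensorProduct.map (𝒜 ij.1).subtype (𝒜 ij.2).subtype))
    (hgrS : ∀ n : ℕ, ∀ x ∈ 𝒜 n, HopfAlgebra.antipode (R := k) x ∈ 𝒜 n) :
    rho 𝒜 ∘ₗ (HopfAlgebra.antipode (R := k) ∘ₗ prj 𝒜)
      = conv (ι₁ ∘ₗ (HopfAlgebra.antipode (R := k) ∘ₗ prj 𝒜))
          (ι₂ ∘ₗ (HopfAlgebra.antipode (R := k) ∘ₗ prj 𝒜)) := by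
  rw [conv_iota]
  ext x
  simp only [LinearMap.comp_apply]
  show LinearMap.lTensor A (prj 𝒜)
      (Coalgebra.comul (R := k) (HopfAlgebra.antipode (R := k) (prj 𝒜 x))) = _
  have e1 : Coalgebra.comul (R := k) (HopfAlgebra.antipode (R := k) (prj 𝒜 x))
      = TensorProduct.map (HopfAlgebra.antipode (R := k)) (HopfAlgebra.antipode (R := k))
          (Coalgebra.comul (R := k) (prj 𝒜 x)) :=
    LinearMap.congr_fun (comul_antipode hcocomm) (prj 𝒜 x)
  rw [e1, ← comul_prj 𝒜 hcomul x]
  -- now both sides are maps applied to `comul x`; prove by generalizing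
  generalize Coalgebra.comul (R := k) x = w
  induction w with
  | zero => simp
  | tmul a b =>
    simp only [TensorProduct.map_tmul, LinearMap.lTensor_tmul, LinearMap.comp_apply,
      LinearMap.id_coe, id_eq]
    rw [prj_of_mem 𝒜 (hgrS 0 _ (prj_mem 𝒜 b))]
  | add u v hu hv => simp only [map_add, hu, hv]

lemma rho_comp_P
    (hcocomm : ∀ x : A,
      TensorProduct.comm k A A (Coalgebra.comul (R := k) x) = Coalgebra.comul (R := k) x)
    (hcomul : ∀ n : ℕ, ∀ x ∈ 𝒜 n, Coalgebra.comul (R := k) x ∈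
      ⨆ (ij : ℕ × ℕ) (_ : ij.1 + ij.2 = n),
        LinearMap.range (TensorProduct.map (𝒜 ij.1).subtype (𝒜 ij.2).subtype))
    (hcounit : ∀ n : ℕ, 0 < n → ∀ x ∈ 𝒜 n, Coalgebra.counit (R := k) x = 0)
    (hone : (1 : A) ∈ 𝒜 0)
    (hgrmul : ∀ i j : ℕ, ∀ x ∈ 𝒜 i, ∀ y ∈ 𝒜 j, x * y ∈ 𝒜 (i + j))
    (hgrS : ∀ n : ℕ, ∀ x ∈ 𝒜 n, HopfAlgebra.antipode (R := k) x ∈ 𝒜 n) :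
    rho 𝒜 ∘ₗ Pmap 𝒜 = ι₁ ∘ₗ Pmap 𝒜 := by
  set S : A →ₗ[k] A := HopfAlgebra.antipode (R := k) with hS
  -- step 1 : comul ∘ P = conv (comul ∘ (S ∘ prj)) comul
  have hΔP : (Coalgebra.comul : A →ₗ[k] A ⊗[k] A) ∘ₗ Pmap 𝒜
      = conv ((Coalgebra.comul : A →ₗ[k] A ⊗[k] A) ∘ₗ (S ∘ₗ prj 𝒜)) Coalgebra.comul := by
    have h := conv_alghom (Bialgebra.comulAlgHom k A) (S ∘ₗ prj 𝒜) LinearMap.id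
    have hc : (Bialgebra.comulAlgHom k A).toLinearMap
        = (Coalgebra.comul : A →ₗ[k] A ⊗[k] A) := rfl
    rw [hc, LinearMap.comp_id] at h
    exact h
  -- step 2 : rho ∘ P = conv (rho ∘ (S ∘ prj)) rho
  have hρP : rho 𝒜 ∘ₗ Pmap 𝒜 = conv (rho 𝒜 ∘ₗ (S ∘ₗ prj 𝒜)) (rho 𝒜) := by
    have h := conv_alghom (mapA 𝒜 hone hgrmul)
      ((Coalgebra.comul : A →ₗ[k] A ⊗[k] A) ∘ₗ (S ∘ₗ prj 𝒜)) Coalgebra.comul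
    rw [mapA_toLinearMap] at h
    calc rho 𝒜 ∘ₗ Pmap 𝒜
        = LinearMap.lTensor A (prj 𝒜) ∘ₗ ((Coalgebra.comul : A →ₗ[k] A ⊗[k] A) ∘ₗ Pmap 𝒜) := by
          rw [rho, LinearMap.comp_assoc]
      _ = LinearMap.lTensor A (prj 𝒜) ∘ₗ
            conv ((Coalgebra.comul : A →ₗ[k] A ⊗[k] A) ∘ₗ (S ∘ₗ prj 𝒜)) Coalgebra.comul := by
          rw [hΔP]
      _ = conv (LinearMap.lTensor A (prj 𝒜) ∘ₗ
            ((Coalgebra.comul : A →ₗ[k] A ⊗[k] A) ∘ₗ (S ∘ₗ prj 𝒜)))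
            (LinearMap.lTensor A (prj 𝒜) ∘ₗ Coalgebra.comul) := h
      _ = conv (rho 𝒜 ∘ₗ (S ∘ₗ prj 𝒜)) (rho 𝒜) := by
          rw [rho, LinearMap.comp_assoc]
  rw [hρP, rho_comp_Sprj 𝒜 hcocomm hcomul hgrS, rho_eq_conv 𝒜, conv_mul_mul hcocomm]
  -- remaining : conv (conv (ι₁∘Sprj) ι₁) (conv (ι₂∘Sprj) (ι₂∘prj)) = ι₁ ∘ P
  have hι₂ : conv (ι₂ ∘ₗ (S ∘ₗ prj 𝒜)) (ι₂ ∘ₗ prj 𝒜) = (cunit : A →ₗ[k] A ⊗[k] A) := by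
    have h := conv_alghom (Algebra.TensorProduct.includeRight (R := k) (A := A) (B := A))
      (S ∘ₗ prj 𝒜) (prj 𝒜)
    rw [conv_Sprj_prj 𝒜 hcomul hcounit, cunit_alghom] at h
    exact h.symm
  rw [hι₂, conv_cunit_right]
  have h := conv_alghom (Algebra.TensorProduct.includeLeft (R := k) (S := k) (A := A) (B := A))
    (S ∘ₗ prj 𝒜) LinearMap.id
  rw [LinearMap.comp_id] at h
  exact h.symm

lemma P_mem_Aconn
    (hcocomm : ∀ x : A,
      TensorProduct.comm k A A (Coalgebra.comul (R := k) x) = Coalgebra.comul (R := k) x)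
    (hcomul : ∀ n : ℕ, ∀ x ∈ 𝒜 n, Coalgebra.comul (R := k) x ∈
      ⨆ (ij : ℕ × ℕ) (_ : ij.1 + ij.2 = n),
        LinearMap.range (TensorProduct.map (𝒜 ij.1).subtype (𝒜 ij.2).subtype))
    (hcounit : ∀ n : ℕ, 0 < n → ∀ x ∈ 𝒜 n, Coalgebra.counit (R := k) x = 0)
    (hone : (1 : A) ∈ 𝒜 0)
    (hgrmul : ∀ i j : ℕ, ∀ x ∈ 𝒜 i, ∀ y ∈ 𝒜 j, x * y ∈ 𝒜 (i + j))
    (hgrS : ∀ n : ℕ, ∀ x ∈ 𝒜 n, HopfAlgebra.antipode (R := k) x ∈ 𝒜 n)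
    (x : A) : Pmap 𝒜 x ∈ Aconn 𝒜 := by
  rw [mem_Aconn_iff]
  have h := LinearMap.congr_fun
    (rho_comp_P 𝒜 hcocomm hcomul hcounit hone hgrmul hgrS) x
  exact h

lemma conv_prj_P
    (hcomul : ∀ n : ℕ, ∀ x ∈ 𝒜 n, Coalgebra.comul (R := k) x ∈
      ⨆ (ij : ℕ × ℕ) (_ : ij.1 + ij.2 = n),
        LinearMap.range (TensorProduct.map (𝒜 ij.1).subtype (𝒜 ij.2).subtype))
    (hcounit : ∀ n : ℕ, 0 < n → ∀ x ∈ 𝒜 n, Coalgebra.counit (R := k) x = 0) :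
    conv (prj 𝒜) (Pmap 𝒜) = LinearMap.id := by
  rw [Pmap, ← conv_assoc, conv_prj_Sprj 𝒜 hcomul hcounit, conv_cunit_left]

lemma comm_map_left (f : A →ₗ[k] A) (z : A ⊗[k] A) :
    TensorProduct.map f LinearMap.id (TensorProduct.comm k A A z)
      = TensorProduct.comm k A A (TensorProduct.map LinearMap.id f z) := by
  induction z with
  | zero => simp
  | tmul a b => simp
  | add u v hu hv => simp only [map_add, hu, hv]

lemma P_fix
    (hcocomm : ∀ x : A,
      TensorProduct.comm k A A (Coalgebra.comul (R := k) x) = Coalgebra.comul (R := k) x)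
    {x : A} (hx : x ∈ Aconn 𝒜) : Pmap 𝒜 x = x := by
  rw [mem_Aconn_iff] at hx
  have h1 : TensorProduct.map (prj 𝒜) LinearMap.id (Coalgebra.comul (R := k) x)
      = (1 : A) ⊗ₜ[k] x := by
    conv_lhs => rw [← hcocomm x]
    rw [comm_map_left]
    rw [show TensorProduct.map LinearMap.id (prj 𝒜) = LinearMap.lTensor A (prj 𝒜) from rfl, hx]
    simp
  have hm : TensorProduct.map (HopfAlgebra.antipode (R := k) ∘ₗ prj 𝒜)
        (LinearMap.id : A →ₗ[k] A)
      = TensorProduct.map (HopfAlgebra.antipode (R := k)) LinearMap.id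
        ∘ₗ TensorProduct.map (prj 𝒜) LinearMap.id := by
    rw [← TensorProduct.map_comp, LinearMap.id_comp]
  have h2 : Pmap 𝒜 x = LinearMap.mul' k A
      (TensorProduct.map (HopfAlgebra.antipode (R := k)) LinearMap.id
        (TensorProduct.map (prj 𝒜) LinearMap.id (Coalgebra.comul (R := k) x))) := by
    rw [Pmap, conv_apply, hm, LinearMap.comp_apply]
  rw [h2, h1]
  simp [antipode_one']

/-- Swap a representation of a comultiplication, using cocommutativity. -/
def reprSwap
    (hcocomm : ∀ x : A,
      TensorProduct.comm k A A (Coalgebra.comul (R := k) x) = Coalgebra.comul (R := k) x)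
    {ι : Type*} {y : A} (re : Coalgebra.Repr k y ι) : Coalgebra.Repr k y ι where
  index := re.index
  left := re.right
  right := re.left
  eq := by
    have h := congrArg (TensorProduct.comm k A A) re.eq
    rw [map_sum] at h
    simp only [TensorProduct.comm_tmul] at h
    rw [hcocomm y] at h
    exact h

@[simp] lemma reprSwap_index (hcocomm) {ι : Type*} {y : A} (re : Coalgebra.Repr k y ι) :
    (reprSwap hcocomm re).index = re.index := rfl
@[simp] lemma reprSwap_left (hcocomm) {ι : Type*} {y : A} (re : Coalgebra.Repr k y ι) :
    (reprSwap hcocomm re).left = re.right := rfl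
@[simp] lemma reprSwap_right (hcocomm) {ι : Type*} {y : A} (re : Coalgebra.Repr k y ι) :
    (reprSwap hcocomm re).right = re.left := rfl

lemma lTensor_P_comul
    (hcocomm : ∀ x : A,
      TensorProduct.comm k A A (Coalgebra.comul (R := k) x) = Coalgebra.comul (R := k) x)
    {x : A} (hx : x ∈ Aconn 𝒜) :
    LinearMap.lTensor A (Pmap 𝒜) (Coalgebra.comul (R := k) x)
      = Coalgebra.comul (R := k) x := by
  rw [mem_Aconn_iff] at hx
  have re := Coalgebra.Repr.arbitrary k x
  have t : ∀ i, Coalgebra.Repr k (re.left i) (A × A) :=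
    fun i => Coalgebra.Repr.arbitrary k (re.left i)
  have s0 : ∀ i, Coalgebra.Repr k (re.right i) (A × A) :=
    fun i => Coalgebra.Repr.arbitrary k (re.right i)
  have key := Coalgebra.sum_map_tmul_tmul_eq (R := k) (LinearMap.id : A →ₗ[k] A)
    (LinearMap.id : A →ₗ[k] A) (prj 𝒜) x (repr := re) (a₁ := t)
    (a₂ := fun i => reprSwap hcocomm (s0 i))
  simp only [reprSwap_index, reprSwap_left, reprSwap_right, LinearMap.id_coe, id_eq] at key
  -- key : ∑ i, ∑ j, l i ⊗ (s0.right j ⊗ prj (s0.left j)) = ∑ i, ∑ m, t.left ⊗ (t.right ⊗ prj (r i))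
  set Θ : A ⊗[k] A →ₗ[k] A ⊗[k] (A ⊗[k] A) :=
    (TensorProduct.assoc k A A A).toLinearMap ∘ₗ LinearMap.rTensor A Coalgebra.comul with hΘ
  have e1 : Θ (∑ i ∈ re.index, re.left i ⊗ₜ[k] prj 𝒜 (re.right i))
      = ∑ i ∈ re.index, ∑ m ∈ (t i).index,
          (t i).left m ⊗ₜ[k] ((t i).right m ⊗ₜ[k] prj 𝒜 (re.right i)) := by
    rw [map_sum]
    refine Finset.sum_congr rfl fun i _ => ?_
    simp only [hΘ, LinearMap.comp_apply, LinearMap.rTensor_tmul]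
    rw [← (t i).eq, TensorProduct.sum_tmul, map_sum]
    simp only [LinearEquiv.coe_coe, TensorProduct.assoc_tmul]
  have e2 : (∑ i ∈ re.index, re.left i ⊗ₜ[k] prj 𝒜 (re.right i)) = x ⊗ₜ[k] (1 : A) := by
    have h := congrArg (LinearMap.lTensor A (prj 𝒜)) re.eq
    rw [map_sum] at h
    simp only [LinearMap.lTensor_tmul] at h
    rw [h, hx]
  have e3 : Θ (x ⊗ₜ[k] (1 : A))
      = ∑ i ∈ re.index, re.left i ⊗ₜ[k] (re.right i ⊗ₜ[k] (1 : A)) := by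
    simp only [hΘ, LinearMap.comp_apply, LinearMap.rTensor_tmul]
    rw [← re.eq, TensorProduct.sum_tmul, map_sum]
    simp only [LinearEquiv.coe_coe, TensorProduct.assoc_tmul]
  have combined : (∑ i ∈ re.index, ∑ j ∈ (s0 i).index,
        re.left i ⊗ₜ[k] ((s0 i).right j ⊗ₜ[k] prj 𝒜 ((s0 i).left j)))
      = ∑ i ∈ re.index, re.left i ⊗ₜ[k] (re.right i ⊗ₜ[k] (1 : A)) := by
    refine key.trans ?_
    rw [← e1, e2, e3]
  have final := congrArg (LinearMap.lTensor A
    (LinearMap.mul' k A ∘ₗ LinearMap.lTensor A (HopfAlgebra.antipode (R := k)))) combined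
  simp only [map_sum, LinearMap.lTensor_tmul, LinearMap.comp_apply,
    LinearMap.mul'_apply] at final
  -- final : ∑ i, ∑ j, l i ⊗ (s0.right * S (prj s0.left)) = ∑ i, l i ⊗ (r i * S 1)
  calc LinearMap.lTensor A (Pmap 𝒜) (Coalgebra.comul (R := k) x)
      = ∑ i ∈ re.index, re.left i ⊗ₜ[k] Pmap 𝒜 (re.right i) := by
        rw [← re.eq, map_sum]
        simp only [LinearMap.lTensor_tmul]
    _ = ∑ i ∈ re.index, ∑ j ∈ (s0 i).index,
          re.left i ⊗ₜ[k]
            ((s0 i).right j * HopfAlgebra.antipode (R := k) (prj 𝒜 ((s0 i).left j))) := by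
        refine Finset.sum_congr rfl fun i _ => ?_
        rw [Pmap, conv_repr _ _ (s0 i), TensorProduct.tmul_sum]
        refine Finset.sum_congr rfl fun j _ => ?_
        simp only [LinearMap.comp_apply, LinearMap.id_coe, id_eq]
        rw [mul_comm]
    _ = ∑ i ∈ re.index, re.left i ⊗ₜ[k] (re.right i * HopfAlgebra.antipode (R := k) 1) :=
        final
    _ = Coalgebra.comul (R := k) x := by
        rw [antipode_one']
        simp only [mul_one]
        exact re.eq

lemma rTensor_P_comul
    (hcocomm : ∀ x : A,
      TensorProduct.comm k A A (Coalgebra.comul (R := k) x) = Coalgebra.comul (R := k) x)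
    {x : A} (hx : x ∈ Aconn 𝒜) :
    LinearMap.rTensor A (Pmap 𝒜) (Coalgebra.comul (R := k) x)
      = Coalgebra.comul (R := k) x := by
  have h1 : LinearMap.rTensor A (Pmap 𝒜) (Coalgebra.comul (R := k) x)
      = TensorProduct.comm k A A
          (LinearMap.lTensor A (Pmap 𝒜) (Coalgebra.comul (R := k) x)) := by
    conv_lhs => rw [← hcocomm x]
    exact comm_map_left (Pmap 𝒜) _
  rw [h1, lTensor_P_comul 𝒜 hcocomm hx, hcocomm x]

lemma one_mem_Aconn (hone : (1 : A) ∈ 𝒜 0) : (1 : A) ∈ Aconn 𝒜 := by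
  rw [mem_Aconn_iff, Bialgebra.comul_one, Algebra.TensorProduct.one_def,
    LinearMap.lTensor_tmul, prj_one 𝒜 hone]

lemma mul_mem_Aconn (hone : (1 : A) ∈ 𝒜 0)
    (hgrmul : ∀ i j : ℕ, ∀ x ∈ 𝒜 i, ∀ y ∈ 𝒜 j, x * y ∈ 𝒜 (i + j))
    {x y : A} (hx : x ∈ Aconn 𝒜) (hy : y ∈ Aconn 𝒜) : x * y ∈ Aconn 𝒜 := by
  rw [mem_Aconn_iff] at hx hy ⊢
  have hlt : ∀ u v : A ⊗[k] A, LinearMap.lTensor A (prj 𝒜) (u * v)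
      = LinearMap.lTensor A (prj 𝒜) u * LinearMap.lTensor A (prj 𝒜) v := by
    intro u v
    rw [← mapA_toLinearMap 𝒜 hone hgrmul]
    simp only [AlgHom.toLinearMap_apply, map_mul]
  rw [Bialgebra.comul_mul, hlt, hx, hy, Algebra.TensorProduct.tmul_mul_tmul, mul_one]

lemma antipode_mem_Aconn
    (hcocomm : ∀ x : A,
      TensorProduct.comm k A A (Coalgebra.comul (R := k) x) = Coalgebra.comul (R := k) x)
    (hgrS : ∀ n : ℕ, ∀ x ∈ 𝒜 n, HopfAlgebra.antipode (R := k) x ∈ 𝒜 n)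
    {x : A} (hx : x ∈ Aconn 𝒜) : HopfAlgebra.antipode (R := k) x ∈ Aconn 𝒜 := by
  rw [mem_Aconn_iff] at hx ⊢
  have e1 : Coalgebra.comul (R := k) (HopfAlgebra.antipode (R := k) x)
      = TensorProduct.map (HopfAlgebra.antipode (R := k)) (HopfAlgebra.antipode (R := k))
          (Coalgebra.comul (R := k) x) :=
    LinearMap.congr_fun (comul_antipode hcocomm) x
  have aux : ∀ z : A ⊗[k] A, LinearMap.lTensor A (prj 𝒜)
        (TensorProduct.map (HopfAlgebra.antipode (R := k)) (HopfAlgebra.antipode (R := k)) z)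
      = TensorProduct.map (HopfAlgebra.antipode (R := k)) (HopfAlgebra.antipode (R := k))
        (LinearMap.lTensor A (prj 𝒜) z) := by
    intro z
    induction z with
    | zero => simp
    | tmul a b =>
      simp only [TensorProduct.map_tmul, LinearMap.lTensor_tmul]
      rw [prj_antipode 𝒜 hgrS b]
    | add u v hu hv => simp only [map_add, hu, hv]
  rw [e1, aux, hx, TensorProduct.map_tmul, antipode_one']

lemma comul_mem_Aconn
    (hcocomm : ∀ x : A,
      TensorProduct.comm k A A (Coalgebra.comul (R := k) x) = Coalgebra.comul (R := k) x)
    (hcomul : ∀ n : ℕ, ∀ x ∈ 𝒜 n, Coalgebra.comul (R := k) x ∈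
      ⨆ (ij : ℕ × ℕ) (_ : ij.1 + ij.2 = n),
        LinearMap.range (TensorProduct.map (𝒜 ij.1).subtype (𝒜 ij.2).subtype))
    (hcounit : ∀ n : ℕ, 0 < n → ∀ x ∈ 𝒜 n, Coalgebra.counit (R := k) x = 0)
    (hone : (1 : A) ∈ 𝒜 0)
    (hgrmul : ∀ i j : ℕ, ∀ x ∈ 𝒜 i, ∀ y ∈ 𝒜 j, x * y ∈ 𝒜 (i + j))
    (hgrS : ∀ n : ℕ, ∀ x ∈ 𝒜 n, HopfAlgebra.antipode (R := k) x ∈ 𝒜 n)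
    {x : A} (hx : x ∈ Aconn 𝒜) :
    Coalgebra.comul (R := k) x ∈
      LinearMap.range (TensorProduct.map (Aconn 𝒜).subtype (Aconn 𝒜).subtype) := by
  set P' : A →ₗ[k] Aconn 𝒜 := LinearMap.codRestrict (Aconn 𝒜) (Pmap 𝒜)
    (P_mem_Aconn 𝒜 hcocomm hcomul hcounit hone hgrmul hgrS) with hP'
  refine ⟨TensorProduct.map P' P' (Coalgebra.comul (R := k) x), ?_⟩
  rw [← LinearMap.comp_apply, ← TensorProduct.map_comp, LinearMap.subtype_comp_codRestrict]
  have h1 := LinearMap.congr_fun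
    (LinearMap.lTensor_comp_rTensor (f := Pmap 𝒜) (g := Pmap 𝒜)) (Coalgebra.comul (R := k) x)
  rw [LinearMap.comp_apply] at h1
  rw [← h1, rTensor_P_comul 𝒜 hcocomm hx, lTensor_P_comul 𝒜 hcocomm hx]

lemma prj_of_mem_Aconn {x : A} (hx : x ∈ Aconn 𝒜) :
    prj 𝒜 x = Coalgebra.counit (R := k) x • 1 := by
  rw [mem_Aconn_iff] at hx
  have hM1 : TensorProduct.map (Coalgebra.counit : A →ₗ[k] k) (prj 𝒜)
      = TensorProduct.map (Coalgebra.counit : A →ₗ[k] k) LinearMap.id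
        ∘ₗ LinearMap.lTensor A (prj 𝒜) := by
    rw [show LinearMap.lTensor A (prj 𝒜)
      = TensorProduct.map LinearMap.id (prj 𝒜) from rfl, ← TensorProduct.map_comp,
      LinearMap.comp_id, LinearMap.id_comp]
  have hM2 : TensorProduct.map (Coalgebra.counit : A →ₗ[k] k) (prj 𝒜)
      = LinearMap.lTensor k (prj 𝒜)
        ∘ₗ TensorProduct.map (Coalgebra.counit : A →ₗ[k] k) LinearMap.id := by
    rw [show LinearMap.lTensor k (prj 𝒜)
      = TensorProduct.map LinearMap.id (prj 𝒜) from rfl, ← TensorProduct.map_comp,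
      LinearMap.comp_id, LinearMap.id_comp]
  have hrT : TensorProduct.map (Coalgebra.counit : A →ₗ[k] k) LinearMap.id
      (Coalgebra.comul (R := k) x) = (1 : k) ⊗ₜ[k] x :=
    Coalgebra.rTensor_counit_comul (R := k) x
  have e1 : TensorProduct.map (Coalgebra.counit : A →ₗ[k] k) (prj 𝒜)
      (Coalgebra.comul (R := k) x) = Coalgebra.counit (R := k) x ⊗ₜ[k] (1 : A) := by
    rw [hM1, LinearMap.comp_apply, hx, TensorProduct.map_tmul]
    simp
  have e2 : TensorProduct.map (Coalgebra.counit : A →ₗ[k] k) (prj 𝒜)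
      (Coalgebra.comul (R := k) x) = (1 : k) ⊗ₜ[k] prj 𝒜 x := by
    rw [hM2, LinearMap.comp_apply, hrT, LinearMap.lTensor_tmul]
  have := e1.symm.trans e2
  have h := congrArg (TensorProduct.lid k A) this
  simpa using h.symm

lemma exists_pair_repr {M N : Submodule k A} {b : A}
    (h : Coalgebra.comul (R := k) b ∈
      LinearMap.range (TensorProduct.map M.subtype N.subtype)) :
    ∃ S : Finset (M × N),
      Coalgebra.comul (R := k) b = ∑ p ∈ S, (p.1 : A) ⊗ₜ[k] (p.2 : A) := by
  obtain ⟨T, hT⟩ := h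
  obtain ⟨S, hS⟩ := TensorProduct.exists_finset T
  refine ⟨S, ?_⟩
  rw [← hT, hS, map_sum]
  simp

lemma prj_mul_conn
    (hgrmul : ∀ i j : ℕ, ∀ x ∈ 𝒜 i, ∀ y ∈ 𝒜 j, x * y ∈ 𝒜 (i + j))
    {α ξ : A} (hα : α ∈ 𝒜 0) (hξ : ξ ∈ Aconn 𝒜) :
    prj 𝒜 (α * ξ) = Coalgebra.counit (R := k) ξ • α := by
  rw [prj_mul 𝒜 hgrmul, prj_of_mem 𝒜 hα, prj_of_mem_Aconn 𝒜 hξ, mul_smul_comm, mul_one]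

lemma comul_mul_expand {b y : A}
    {Sb : Finset (𝒜 0 × 𝒜 0)} {Sy : Finset (Aconn 𝒜 × Aconn 𝒜)}
    (hSb : Coalgebra.comul (R := k) b = ∑ p ∈ Sb, (p.1 : A) ⊗ₜ[k] (p.2 : A))
    (hSy : Coalgebra.comul (R := k) y = ∑ q ∈ Sy, (q.1 : A) ⊗ₜ[k] (q.2 : A)) :
    Coalgebra.comul (R := k) (b * y)
      = ∑ p ∈ Sb, ∑ q ∈ Sy, ((p.1 : A) * (q.1 : A)) ⊗ₜ[k] ((p.2 : A) * (q.2 : A)) := by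
  rw [Bialgebra.comul_mul, hSb, hSy, Finset.sum_mul_sum]
  exact Finset.sum_congr rfl fun p _ => Finset.sum_congr rfl fun q _ =>
    Algebra.TensorProduct.tmul_mul_tmul _ _ _ _

lemma Pmap_mul_conn
    (hcocomm : ∀ x : A,
      TensorProduct.comm k A A (Coalgebra.comul (R := k) x) = Coalgebra.comul (R := k) x)
    (hcomul : ∀ n : ℕ, ∀ x ∈ 𝒜 n, Coalgebra.comul (R := k) x ∈
      ⨆ (ij : ℕ × ℕ) (_ : ij.1 + ij.2 = n),
        LinearMap.range (TensorProduct.map (𝒜 ij.1).subtype (𝒜 ij.2).subtype))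
    (hcounit : ∀ n : ℕ, 0 < n → ∀ x ∈ 𝒜 n, Coalgebra.counit (R := k) x = 0)
    (hone : (1 : A) ∈ 𝒜 0)
    (hgrmul : ∀ i j : ℕ, ∀ x ∈ 𝒜 i, ∀ y ∈ 𝒜 j, x * y ∈ 𝒜 (i + j))
    (hgrS : ∀ n : ℕ, ∀ x ∈ 𝒜 n, HopfAlgebra.antipode (R := k) x ∈ 𝒜 n)
    {b y : A} (hb : b ∈ 𝒜 0) (hy : y ∈ Aconn 𝒜) :
    Pmap 𝒜 (b * y) = Coalgebra.counit (R := k) b • y := by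
  obtain ⟨Sb, hSb⟩ := exists_pair_repr (comul_mem_A0 𝒜 hcomul hb)
  obtain ⟨Sy, hSy⟩ := exists_pair_repr
    (comul_mem_Aconn 𝒜 hcocomm hcomul hcounit hone hgrmul hgrS hy)
  rw [Pmap, conv_apply, comul_mul_expand 𝒜 hSb hSy]
  simp only [map_sum, TensorProduct.map_tmul, LinearMap.mul'_apply, LinearMap.comp_apply,
    LinearMap.id_coe, id_eq]
  have hterm : ∀ p ∈ Sb, ∀ q ∈ Sy,
      HopfAlgebra.antipode (R := k) (prj 𝒜 ((p.1 : A) * (q.1 : A))) * ((p.2 : A) * (q.2 : A))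
      = (HopfAlgebra.antipode (R := k) (p.1 : A) * (p.2 : A))
          * (Coalgebra.counit (R := k) (q.1 : A) • (q.2 : A)) := by
    intro p _ q _
    rw [prj_mul_conn 𝒜 hgrmul p.1.2 q.1.2, map_smul, smul_mul_assoc, mul_smul_comm,
      mul_assoc]
  calc ∑ p ∈ Sb, ∑ q ∈ Sy,
        HopfAlgebra.antipode (R := k) (prj 𝒜 ((p.1 : A) * (q.1 : A)))
          * ((p.2 : A) * (q.2 : A))
      = ∑ p ∈ Sb, ∑ q ∈ Sy,
          (HopfAlgebra.antipode (R := k) (p.1 : A) * (p.2 : A))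
            * (Coalgebra.counit (R := k) (q.1 : A) • (q.2 : A)) :=
        Finset.sum_congr rfl fun p hp => Finset.sum_congr rfl fun q hq => hterm p hp q hq
    _ = (∑ p ∈ Sb, HopfAlgebra.antipode (R := k) (p.1 : A) * (p.2 : A))
          * (∑ q ∈ Sy, Coalgebra.counit (R := k) (q.1 : A) • (q.2 : A)) :=
        (Finset.sum_mul_sum _ _ _ _).symm
    _ = Coalgebra.counit (R := k) b • y := by
        rw [show (∑ p ∈ Sb, HopfAlgebra.antipode (R := k) (p.1 : A) * (p.2 : A))
            = Coalgebra.counit (R := k) b • 1 from HopfAlgebra.sum_antipode_mul_eq_smul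
              ⟨Sb, fun p => (p.1 : A), fun p => (p.2 : A), hSb.symm⟩,
          show (∑ q ∈ Sy, Coalgebra.counit (R := k) (q.1 : A) • (q.2 : A)) = y from
            _root_.sum_counit_smul ⟨Sy, fun q => (q.1 : A), fun q => (q.2 : A), hSy.symm⟩,
          smul_mul_assoc, one_mul]

variable (hcocomm : ∀ x : A,
      TensorProduct.comm k A A (Coalgebra.comul (R := k) x) = Coalgebra.comul (R := k) x)
    (hcomul : ∀ n : ℕ, ∀ x ∈ 𝒜 n, Coalgebra.comul (R := k) x ∈
      ⨆ (ij : ℕ × ℕ) (_ : ij.1 + ij.2 = n),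
        LinearMap.range (TensorProduct.map (𝒜 ij.1).subtype (𝒜 ij.2).subtype))
    (hcounit : ∀ n : ℕ, 0 < n → ∀ x ∈ 𝒜 n, Coalgebra.counit (R := k) x = 0)
    (hone : (1 : A) ∈ 𝒜 0)
    (hgrmul : ∀ i j : ℕ, ∀ x ∈ 𝒜 i, ∀ y ∈ 𝒜 j, x * y ∈ 𝒜 (i + j))
    (hgrS : ∀ n : ℕ, ∀ x ∈ 𝒜 n, HopfAlgebra.antipode (R := k) x ∈ 𝒜 n)

/-- `P`, corestricted to the connected component. -/
def Pres : A →ₗ[k] Aconn 𝒜 :=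
  LinearMap.codRestrict (Aconn 𝒜) (Pmap 𝒜)
    (P_mem_Aconn 𝒜 hcocomm hcomul hcounit hone hgrmul hgrS)

lemma Psi_tmul (a : 𝒜 0) (x : Aconn 𝒜) :
    TensorProduct.map (pr0 𝒜) (Pres 𝒜 hcocomm hcomul hcounit hone hgrmul hgrS)
        (Coalgebra.comul (R := k) ((a : A) * (x : A)))
      = a ⊗ₜ[k] x := by
  obtain ⟨Sb, hSb⟩ := exists_pair_repr (comul_mem_A0 𝒜 hcomul a.2)
  obtain ⟨Sy, hSy⟩ := exists_pair_repr
    (comul_mem_Aconn 𝒜 hcocomm hcomul hcounit hone hgrmul hgrS x.2)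
  rw [comul_mul_expand 𝒜 hSb hSy]
  simp only [map_sum, TensorProduct.map_tmul]
  have hA : ∀ p : 𝒜 0 × 𝒜 0, ∀ q : Aconn 𝒜 × Aconn 𝒜,
      pr0 𝒜 ((p.1 : A) * (q.1 : A)) = Coalgebra.counit (R := k) (q.1 : A) • p.1 := by
    intro p q
    exact Subtype.ext (prj_mul_conn 𝒜 hgrmul p.1.2 q.1.2)
  have hB : ∀ p : 𝒜 0 × 𝒜 0, ∀ q : Aconn 𝒜 × Aconn 𝒜,
      Pres 𝒜 hcocomm hcomul hcounit hone hgrmul hgrS ((p.2 : A) * (q.2 : A))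
        = Coalgebra.counit (R := k) (p.2 : A) • q.2 := by
    intro p q
    exact Subtype.ext
      (Pmap_mul_conn 𝒜 hcocomm hcomul hcounit hone hgrmul hgrS p.2.2 q.2.2)
  calc ∑ p ∈ Sb, ∑ q ∈ Sy,
        pr0 𝒜 ((p.1 : A) * (q.1 : A)) ⊗ₜ[k]
          Pres 𝒜 hcocomm hcomul hcounit hone hgrmul hgrS ((p.2 : A) * (q.2 : A))
      = ∑ p ∈ Sb, ∑ q ∈ Sy,
          (Coalgebra.counit (R := k) (p.2 : A) • p.1) ⊗ₜ[k]
            (Coalgebra.counit (R := k) (q.1 : A) • q.2) := by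
        refine Finset.sum_congr rfl fun p _ => Finset.sum_congr rfl fun q _ => ?_
        rw [hA p q, hB p q, ← TensorProduct.smul_tmul', ← TensorProduct.smul_tmul',
          TensorProduct.tmul_smul, TensorProduct.tmul_smul, smul_smul, smul_smul, mul_comm]
    _ = (∑ p ∈ Sb, Coalgebra.counit (R := k) (p.2 : A) • p.1) ⊗ₜ[k]
          (∑ q ∈ Sy, Coalgebra.counit (R := k) (q.1 : A) • q.2) := by
        rw [TensorProduct.sum_tmul]
        exact Finset.sum_congr rfl fun p _ => (TensorProduct.tmul_sum _ _ _).symm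
    _ = a ⊗ₜ[k] x := by
        congr 1
        · refine Subtype.ext ?_
          rw [show ((∑ p ∈ Sb, Coalgebra.counit (R := k) (p.2 : A) • p.1 : 𝒜 0) : A)
            = ∑ p ∈ Sb, Coalgebra.counit (R := k) (p.2 : A) • (p.1 : A) by
              simp [AddSubmonoidClass.coe_finset_sum]]
          exact sum_smul_counit ⟨Sb, fun p => (p.1 : A), fun p => (p.2 : A), hSb.symm⟩
        · refine Subtype.ext ?_
          rw [show ((∑ q ∈ Sy, Coalgebra.counit (R := k) (q.1 : A) • q.2 : Aconn 𝒜) : A)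
            = ∑ q ∈ Sy, Coalgebra.counit (R := k) (q.1 : A) • (q.2 : A) by
              simp [AddSubmonoidClass.coe_finset_sum]]
          exact _root_.sum_counit_smul ⟨Sy, fun q => (q.1 : A), fun q => (q.2 : A), hSy.symm⟩

end Core

end Stmt2Aux

/-- Let `A` be an `ℕ`-graded commutative and cocommutative Hopf
algebra over a commutative ring `k`.  Then the degree-zero part `A(0)` and the
connected component `A′ = {x | (id ⊗ p)(Δx) = x ⊗ 1}` of the unit are Hopf
subalgebras (they contain `1` and are closed under multiplication, comultiplication
and antipode), and the multiplication map `A(0) ⊗_k A′ → A`, `a ⊗ x ↦ a·x`, is an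
isomorphism (of Hopf algebras, where `A(0) ⊗_k A′` carries the tensor-product Hopf
structure); in particular it is a bijective `k`-linear map. -/
theorem stmt2 (k A : Type*) [CommRing k] [CommRing A] [HopfAlgebra k A]
    (hcocomm : ∀ x : A,
      TensorProduct.comm k A A (Coalgebra.comul (R := k) x) = Coalgebra.comul (R := k) x)
    (𝒜 : ℕ → Submodule k A) [DirectSum.Decomposition 𝒜]
    (hcomul : ∀ n : ℕ, ∀ x ∈ 𝒜 n, Coalgebra.comul (R := k) x ∈
      ⨆ (ij : ℕ × ℕ) (_ : ij.1 + ij.2 = n),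
        LinearMap.range (TensorProduct.map (𝒜 ij.1).subtype (𝒜 ij.2).subtype))
    (hcounit : ∀ n : ℕ, 0 < n → ∀ x ∈ 𝒜 n, Coalgebra.counit (R := k) x = 0)
    (hone : (1 : A) ∈ 𝒜 0)
    (hgrmul : ∀ i j : ℕ, ∀ x ∈ 𝒜 i, ∀ y ∈ 𝒜 j, x * y ∈ 𝒜 (i + j))
    (hgrS : ∀ n : ℕ, ∀ x ∈ 𝒜 n, HopfAlgebra.antipode (R := k) x ∈ 𝒜 n) :
    -- `pr` is the projection of `A` onto the degree-zero component `A(0)`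
    let pr : A →ₗ[k] A := (𝒜 0).subtype ∘ₗ
      (DirectSum.component k ℕ (fun i => ↥(𝒜 i)) 0) ∘ₗ
      (DirectSum.decomposeLinearEquiv 𝒜).toLinearMap
    ∃ A' : Submodule k A,
      -- `A'` is the connected component of the unit
      (∀ x : A, x ∈ A' ↔
        LinearMap.lTensor A pr (Coalgebra.comul (R := k) x) = x ⊗ₜ[k] (1 : A)) ∧
      -- `A(0)` is a Hopf subalgebra
      (1 : A) ∈ 𝒜 0 ∧
      (∀ x ∈ 𝒜 0, ∀ y ∈ 𝒜 0, x * y ∈ 𝒜 0) ∧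
      (∀ x ∈ 𝒜 0, Coalgebra.comul (R := k) x ∈
        LinearMap.range (TensorProduct.map (𝒜 0).subtype (𝒜 0).subtype)) ∧
      (∀ x ∈ 𝒜 0, HopfAlgebra.antipode (R := k) x ∈ 𝒜 0) ∧
      -- `A'` is a Hopf subalgebra
      (1 : A) ∈ A' ∧
      (∀ x ∈ A', ∀ y ∈ A', x * y ∈ A') ∧
      (∀ x ∈ A', Coalgebra.comul (R := k) x ∈
        LinearMap.range (TensorProduct.map A'.subtype A'.subtype)) ∧
      (∀ x ∈ A', HopfAlgebra.antipode (R := k) x ∈ A') ∧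
      -- the multiplication map `A(0) ⊗ A' → A` is an isomorphism
      Function.Bijective
        (LinearMap.mul' k A ∘ₗ TensorProduct.map (𝒜 0).subtype A'.subtype) := by
  intro pr
  refine ⟨Aconn 𝒜, fun x => mem_Aconn_iff 𝒜 x, hone,
    fun x hx y hy => by simpa using hgrmul 0 0 x hx y hy,
    fun x hx => comul_mem_A0 𝒜 hcomul hx,
    fun x hx => hgrS 0 x hx,
    one_mem_Aconn 𝒜 hone,
    fun x hx y hy => mul_mem_Aconn 𝒜 hone hgrmul hx hy,
    fun x hx => comul_mem_Aconn 𝒜 hcocomm hcomul hcounit hone hgrmul hgrS hx,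
    fun x hx => antipode_mem_Aconn 𝒜 hcocomm hgrS hx,
    ?_, ?_⟩
  · -- injectivity
    intro w₁ w₂ h
    have hleft : (TensorProduct.map (pr0 𝒜)
          (Pres 𝒜 hcocomm hcomul hcounit hone hgrmul hgrS)
        ∘ₗ (Coalgebra.comul : A →ₗ[k] A ⊗[k] A))
        ∘ₗ (LinearMap.mul' k A ∘ₗ
          TensorProduct.map (𝒜 0).subtype (Aconn 𝒜).subtype) = LinearMap.id := by
      apply TensorProduct.ext'
      intro a x
      simp only [LinearMap.comp_apply, TensorProduct.map_tmul, LinearMap.mul'_apply,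
        Submodule.coe_subtype, LinearMap.id_coe, id_eq]
      exact Psi_tmul 𝒜 hcocomm hcomul hcounit hone hgrmul hgrS a x
    have h1 := LinearMap.congr_fun hleft w₁
    have h2 := LinearMap.congr_fun hleft w₂
    simp only [LinearMap.comp_apply, LinearMap.id_coe, id_eq] at h1 h2
    simp only [LinearMap.comp_apply] at h
    rw [← h1, ← h2, h]
  · -- surjectivity
    intro z
    refine ⟨TensorProduct.map (pr0 𝒜)
      (Pres 𝒜 hcocomm hcomul hcounit hone hgrmul hgrS) (Coalgebra.comul (R := k) z), ?_⟩
    have hc : TensorProduct.map ((𝒜 0).subtype) ((Aconn 𝒜).subtype)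
        ∘ₗ TensorProduct.map (pr0 𝒜) (Pres 𝒜 hcocomm hcomul hcounit hone hgrmul hgrS)
        = TensorProduct.map (prj 𝒜) (Pmap 𝒜) := by
      rw [← TensorProduct.map_comp]
      congr 1
    have hc' := LinearMap.congr_fun hc (Coalgebra.comul (R := k) z)
    rw [LinearMap.comp_apply] at hc'
    show LinearMap.mul' k A (TensorProduct.map ((𝒜 0).subtype) ((Aconn 𝒜).subtype)
      (TensorProduct.map (pr0 𝒜) (Pres 𝒜 hcocomm hcomul hcounit hone hgrmul hgrS)
        (Coalgebra.comul (R := k) z))) = z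
    rw [hc']
    exact LinearMap.congr_fun (conv_prj_P 𝒜 hcomul hcounit) z
end

section
/- Let A be the 𝔽₂-vector space with basis {β_n}_{n ∈ ℕ}, made into a bialgebra over 𝔽₂ by the product β_i · β_j = (C(i+j, i) mod 2) · β_{i+j} with unit β₀, the comultiplication Δ(β_n) = Σ_{i+j=n} β_i ⊗ β_j, and the counit ε(β_n) = 1 if n = 0 and 0 otherwise. Then the 𝔽₂-linear map v : A → A defined on the basis by v(β_{2n}) = β_n and v(β_{2n+1}) = 0 is a surjective homomorphism of bialgebras: v(β₀) = β₀, v(x·y) = v(x)·v(y) for all x, y ∈ A, (v ⊗ v) ∘ Δ = Δ ∘ v, ε ∘ v = ε, and v is surjective. -/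
open TensorProduct

/-- Lucas' theorem mod 2 in the form we need. -/
lemma lucas2 (n k : ℕ) : ((n.choose k : ZMod 2)) =
    ((n % 2).choose (k % 2) : ZMod 2) * ((n / 2).choose (k / 2) : ZMod 2) := by
  have h := @Choose.choose_modEq_choose_mod_mul_choose_div_nat n k 2 ⟨Nat.prime_two⟩
  have h2 := (ZMod.natCast_eq_natCast_iff _ _ _).mpr h
  push_cast at h2
  exact h2

/-- On the mod-2 divided power bialgebra (basis `{β_n}`, product
`β_i · β_j = C(i+j,i) β_{i+j} mod 2`, coproduct `Δ(β_n) = Σ_{i+j=n} β_i ⊗ β_j`,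
counit `ε(β_n) = δ_{n,0}`), the Verschiebung `v` determined by `v(β_{2n}) = β_n` and
`v(β_{2n+1}) = 0` is a surjective homomorphism of bialgebras. -/
theorem stmt8 (β : ℕ → (ℕ →₀ ZMod 2)) (hβ : ∀ n, β n = Finsupp.single n 1)
    (m : (ℕ →₀ ZMod 2) →ₗ[ZMod 2] (ℕ →₀ ZMod 2) →ₗ[ZMod 2] (ℕ →₀ ZMod 2))
    (hm : ∀ i j, m (β i) (β j) = Finsupp.single (i + j) ((i + j).choose i : ZMod 2))
    (Δ : (ℕ →₀ ZMod 2) →ₗ[ZMod 2] (ℕ →₀ ZMod 2) ⊗[ZMod 2] (ℕ →₀ ZMod 2))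
    (hΔ : ∀ n, Δ (β n) = ∑ ij ∈ Finset.HasAntidiagonal.antidiagonal n, β ij.1 ⊗ₜ[ZMod 2] β ij.2)
    (ε : (ℕ →₀ ZMod 2) →ₗ[ZMod 2] ZMod 2)
    (hε : ∀ n, ε (β n) = if n = 0 then 1 else 0)
    (v : (ℕ →₀ ZMod 2) →ₗ[ZMod 2] (ℕ →₀ ZMod 2))
    (hv_even : ∀ n, v (β (2 * n)) = β n)
    (hv_odd : ∀ n, v (β (2 * n + 1)) = 0) :
    -- `v` preserves the unit and the product
    v (β 0) = β 0 ∧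
    (∀ x y, v (m x y) = m (v x) (v y)) ∧
    -- `v` is a coalgebra map
    (∀ x, TensorProduct.map v v (Δ x) = Δ (v x)) ∧
    (∀ x, ε (v x) = ε x) ∧
    -- `v` is surjective
    Function.Surjective v := by
  -- single as smul of basis
  have hsingle : ∀ (a : ℕ) (b : ZMod 2), Finsupp.single a b = b • β a := by
    intro a b
    rw [hβ, Finsupp.smul_single', mul_one]
  -- product preservation on basis vectors
  have hmul_basis : ∀ i j, v (m (β i) (β j)) = m (v (β i)) (v (β j)) := by
    intro i j
    rcases Nat.even_or_odd i with ⟨a, ha⟩ | ⟨a, ha⟩ <;>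
      rcases Nat.even_or_odd j with ⟨b, hb⟩ | ⟨b, hb⟩
    · -- i = 2a, j = 2b
      subst ha hb
      have h1 : a + a = 2 * a := by ring
      have h2 : b + b = 2 * b := by ring
      rw [h1, h2, hm, hv_even, hv_even, hm, hsingle, hsingle, map_smul,
        show 2 * a + 2 * b = 2 * (a + b) by ring, hv_even]
      congr 1
      rw [lucas2]
      simp [Nat.mul_div_cancel_left, Nat.mul_mod_right]
    · -- i = 2a, j = 2b+1 : both sides zero
      subst ha hb
      have h1 : a + a = 2 * a := by ring
      rw [h1, hm, hv_even, hv_odd, hsingle, map_smul,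
        show 2 * a + (2 * b + 1) = 2 * (a + b) + 1 by ring, hv_odd, smul_zero]
      simp
    · -- i = 2a+1, j = 2b
      subst ha hb
      have h2 : b + b = 2 * b := by ring
      rw [h2, hm, hv_odd, hv_even, hsingle, map_smul,
        show 2 * a + 1 + 2 * b = 2 * (a + b) + 1 by ring, hv_odd, smul_zero]
      simp
    · -- i = 2a+1, j = 2b+1 : coefficient is even by Lucas
      subst ha hb
      rw [hm, hv_odd, hv_odd, hsingle, map_smul]
      have hc : (((2 * a + 1 + (2 * b + 1)).choose (2 * a + 1) : ℕ) : ZMod 2) = 0 := by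
        rw [lucas2]
        have : (2 * a + 1 + (2 * b + 1)) % 2 = 0 := by omega
        have h2 : (2 * a + 1) % 2 = 1 := by omega
        rw [this, h2]
        simp
      rw [hc, zero_smul]
      simp
  refine ⟨?_, ?_, ?_, ?_, ?_⟩
  · -- unit
    simpa using hv_even 0
  · -- product, extended by bilinearity
    intro x y
    induction x using Finsupp.induction_linear with
    | zero => simp
    | add f g hf hg => simp [map_add, hf, hg]
    | single a c =>
      induction y using Finsupp.induction_linear with
      | zero => simp
      | add f g hf hg => simp [map_add, hf, hg]
      | single b d =>
        rw [hsingle a c, hsingle b d]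
        simp only [map_smul, LinearMap.smul_apply, LinearMap.map_smul]
        rw [hmul_basis a b]
  · -- coalgebra map
    have hco : ∀ n, TensorProduct.map v v (Δ (β n)) = Δ (v (β n)) := by
      intro n
      rcases Nat.even_or_odd n with ⟨k, hk⟩ | ⟨k, hk⟩
      · -- n = 2k
        subst hk
        have hk2 : k + k = 2 * k := by ring
        rw [hk2, hΔ, map_sum, hv_even, hΔ]
        simp only [TensorProduct.map_tmul]
        -- sum over antidiagonal (2k) restricts to doubled pairs
        have hinj : Set.InjOn (fun ab : ℕ × ℕ => (2 * ab.1, 2 * ab.2))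
            (Finset.HasAntidiagonal.antidiagonal k) := by
          intro p _ q _ h
          simp only [Prod.mk.injEq] at h
          exact Prod.ext (by omega) (by omega)
        have hsub : (Finset.HasAntidiagonal.antidiagonal k).image (fun ab : ℕ × ℕ => (2 * ab.1, 2 * ab.2)) ⊆
            Finset.HasAntidiagonal.antidiagonal (2 * k) := by
          intro p hp
          simp only [Finset.mem_image, Finset.HasAntidiagonal.mem_antidiagonal] at hp ⊢
          obtain ⟨q, hq, rfl⟩ := hp
          omega
        rw [← Finset.sum_subset hsub, Finset.sum_image (fun p hp q hq h => hinj hp hq h)]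
        · apply Finset.sum_congr rfl
          intro p _
          rw [hv_even, hv_even]
        · intro p hp hnp
          simp only [Finset.HasAntidiagonal.mem_antidiagonal] at hp
          rcases Nat.even_or_odd p.1 with ⟨a, ha⟩ | ⟨a, ha⟩
          · exfalso
            apply hnp
            simp only [Finset.mem_image, Finset.HasAntidiagonal.mem_antidiagonal]
            exact ⟨(a, k - a), by omega, Prod.ext (by omega) (by omega)⟩
          · have : p.1 = 2 * a + 1 := by omega
            rw [show p = (2 * a + 1, p.2) from Prod.ext this rfl]
            rw [hv_odd, TensorProduct.zero_tmul]
      · -- n = 2k+1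
        subst hk
        simp only [hΔ, hv_odd, map_zero, map_sum]
        apply Finset.sum_eq_zero
        intro p hp
        simp only [Finset.HasAntidiagonal.mem_antidiagonal] at hp
        rcases Nat.even_or_odd p.1 with ⟨a, ha⟩ | ⟨a, ha⟩
        · have hb : p.2 = 2 * (k - a) + 1 := by omega
          rw [TensorProduct.map_tmul, show p.2 = 2 * (k - a) + 1 from hb, hv_odd,
            TensorProduct.tmul_zero]
        · rw [TensorProduct.map_tmul, show p.1 = 2 * a + 1 by omega, hv_odd,
            TensorProduct.zero_tmul]
    intro x
    induction x using Finsupp.induction_linear with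
    | zero => simp
    | add f g hf hg => simp [map_add, hf, hg]
    | single a c => rw [hsingle a c, map_smul, map_smul, map_smul, hco, map_smul]
  · -- counit
    have hcu : ∀ n, ε (v (β n)) = ε (β n) := by
      intro n
      rcases Nat.even_or_odd n with ⟨k, hk⟩ | ⟨k, hk⟩
      · subst hk
        rw [show k + k = 2 * k by ring, hv_even, hε, hε]
        rcases eq_or_ne k 0 with h | h
        · simp [h]
        · simp [h]
      · subst hk
        rw [hv_odd, map_zero, hε]
        simp
    intro x
    induction x using Finsupp.induction_linear with
    | zero => simp
    | add f g hf hg => simp [map_add, hf, hg]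
    | single a c => rw [hsingle a c, map_smul, map_smul, hcu, map_smul]
  · -- surjective
    intro x
    have : x ∈ LinearMap.range v := by
      induction x using Finsupp.induction_linear with
      | zero => exact Submodule.zero_mem _
      | add f g hf hg => exact Submodule.add_mem _ hf hg
      | single a c =>
        exact ⟨c • β (2 * a), by rw [map_smul, hv_even, hsingle]⟩
    exact this
end

section
/- Let 𝒞 be an additive category admitting countable coproducts and let F : Ab → 𝒞 be an additive functor from the category of abelian groups that preserves countable coproducts. Let A₀ → A₁ → A₂ → ⋯ be a sequence of abelian groups and homomorphisms whose colimit A = colim Aₙ is a free abelian group. Then the sequence F(A₀) → F(A₁) → ⋯ has a colimit in 𝒞, and the maps F(Aₙ) → F(A) obtained by applying F to the canonical maps Aₙ → A exhibit F(A) as that colimit. -/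
open CategoryTheory CategoryTheory.Limits DirectSum

/-- Let `𝒞` be an additive category with countable coproducts and
`F : Ab ⥤ 𝒞` an additive functor preserving countable coproducts.  If a sequence
`A₀ → A₁ → ⋯` of abelian groups has a colimit which is a free abelian group, then
applying `F` to a colimit cocone again yields a colimit cocone (in particular the
sequence `F(A₀) → F(A₁) → ⋯` has a colimit, namely `F(colim Aₙ)`). -/
theorem stmt11 {C : Type*} [Category C] [Preadditive C] [HasFiniteBiproducts C]
    (hcoprod : ∀ (J : Type) [Countable J], HasColimitsOfShape (Discrete J) C)
    (F : AddCommGrpCat.{0} ⥤ C) [F.Additive]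
    (hF : ∀ (J : Type) [Countable J], PreservesColimitsOfShape (Discrete J) F)
    (A : ℕ ⥤ AddCommGrpCat.{0}) (c : Cocone A) (hc : IsColimit c)
    (hfree : Module.Free ℤ c.pt) :
    Nonempty (IsColimit (F.mapCocone c)) := by
  classical
  -- the direct sum
  set β : ℕ → Type := fun n => ↥(A.obj n) with hβ
  let S : AddCommGrpCat.{0} := AddCommGrpCat.of (⨁ n, β n)
  let ι : ∀ n, A.obj n ⟶ S := fun n => AddCommGrpCat.ofHom (DirectSum.of β n)
  let f : ∀ n, β n →+ β (n + 1) := fun n => (A.map (homOfLE (Nat.le_succ n))).hom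
  -- the shift map and d = id - shift
  let t : S ⟶ S :=
    AddCommGrpCat.ofHom (DirectSum.toAddMonoid fun n => (DirectSum.of β (n + 1)).comp (f n))
  let d : S ⟶ S := 𝟙 S - t
  let t' : (⨁ n, β n) →+ (⨁ n, β n) := t.hom
  let d' : (⨁ n, β n) →+ (⨁ n, β n) := d.hom
  -- the projection to the colimit
  let πc : ∀ n, β n →+ ↥c.pt := fun n => (c.ι.app n).hom
  let π : S ⟶ c.pt := AddCommGrpCat.ofHom (DirectSum.toAddMonoid πc)
  let π' : (⨁ n, β n) →+ ↥c.pt := π.hom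
  -- pointwise arithmetic for AddCommGrpCat morphisms
  have subApply : ∀ {X Y : AddCommGrpCat.{0}} (g h : X ⟶ Y) (x : X), (g - h) x = g x - h x :=
    fun g h x => rfl
  have addApply : ∀ {X Y : AddCommGrpCat.{0}} (g h : X ⟶ Y) (x : X), (g + h) x = g x + h x :=
    fun g h x => rfl
  -- extension lemma
  have Sext : ∀ {X : AddCommGrpCat.{0}} (g h : S ⟶ X), (∀ n, ι n ≫ g = ι n ≫ h) → g = h := by
    intro X g h H
    have : ∀ n, g.hom.comp (DirectSum.of β n)
        = h.hom.comp (DirectSum.of β n) := by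
      intro n
      ext a
      exact ConcreteCategory.congr_hom (H n) a
    exact AddCommGrpCat.hom_ext (DirectSum.addHom_ext' this)
  have h_ι_π : ∀ n, ι n ≫ π = c.ι.app n := by
    intro n
    ext a
    show π' (DirectSum.of β n a) = πc n a
    exact DirectSum.toAddMonoid_of πc n a
  have h_t_of : ∀ n (a : β n), t' (DirectSum.of β n a) = DirectSum.of β (n + 1) (f n a) :=
    fun n a => DirectSum.toAddMonoid_of _ n a
  have h_ι_d : ∀ n, ι n ≫ d = ι n - (A.map (homOfLE (Nat.le_succ n)) ≫ ι (n + 1)) := by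
    intro n
    refine AddCommGrpCat.ext fun a => ?_
    show d (DirectSum.of β n a) = _
    rw [subApply]
    show (DirectSum.of β n a) - t' (DirectSum.of β n a) = _
    rw [h_t_of]
    rfl
  -- components of t
  have ht0 : ∀ x : ⨁ n, β n, (t' x) 0 = 0 := by
    intro x
    induction x using DirectSum.induction_on with
    | zero => simp
    | of n a =>
      rw [h_t_of]
      exact DirectSum.of_eq_of_ne _ _ _ (Nat.succ_ne_zero n).symm
    | add x y hx hy =>
      rw [map_add, DFinsupp.add_apply, hx, hy, add_zero]
  have htS : ∀ (x : ⨁ n, β n) m, (t' x) (m + 1) = f m (x m) := by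
    intro x m
    induction x using DirectSum.induction_on with
    | zero => simp
    | of n a =>
      rw [h_t_of]
      by_cases h : n = m
      · subst h
        rw [DirectSum.of_eq_same, DirectSum.of_eq_same]
      · rw [DirectSum.of_eq_of_ne _ _ _ (by omega), DirectSum.of_eq_of_ne _ _ _ (Ne.symm h), map_zero]
    | add x y hx hy =>
      rw [map_add, DFinsupp.add_apply, hx, hy, DFinsupp.add_apply, map_add]
  -- injectivity of d
  have hd_apply : ∀ x : ⨁ n, β n, d' x = x - t' x := fun x => rfl
  have hd_inj : Function.Injective d' := by
    intro x y hxy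
    have h : d' (x - y) = 0 := by rw [map_sub, hxy, sub_self]
    have hfix : ∀ m, (x - y) m = t' (x - y) m := by
      intro m
      have := hd_apply (x - y)
      rw [h] at this
      have := this.symm
      rw [sub_eq_zero] at this
      exact congrFun (congrArg _ this) m
    have hz : ∀ m, (x - y) m = 0 := by
      intro m
      induction m with
      | zero => rw [hfix 0, ht0]
      | succ k ih => rw [hfix (k + 1), htS, ih, map_zero]
    have : x - y = 0 := DFinsupp.ext hz
    exact sub_eq_zero.mp this
  -- surjectivity of π
  have hπ_surj : Function.Surjective π' := by
    intro x
    let H := π'.range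
    let cc : Cocone A :=
      { pt := AddCommGrpCat.of ↥H
        ι :=
          { app := fun n => AddCommGrpCat.ofHom
              ((πc n).codRestrict H (fun a => ⟨DirectSum.of β n a, DirectSum.toAddMonoid_of πc n a⟩))
            naturality := by
              intro n m g
              ext a
              refine Subtype.ext ?_
              show πc m (A.map g a) = πc n a
              exact ConcreteCategory.congr_hom (c.w g) a } }
    let v : c.pt ⟶ cc.pt := hc.desc cc
    let incl : cc.pt ⟶ c.pt := AddCommGrpCat.ofHom H.subtype
    have hvincl : v ≫ incl = 𝟙 c.pt := by
      apply hc.hom_ext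
      intro n
      simp only [Category.comp_id, ← Category.assoc, hc.fac]
      ext a
      exact congrArg Subtype.val (ConcreteCategory.congr_hom (hc.fac cc n) a)
    have : incl (v x) = x := ConcreteCategory.congr_hom hvincl x
    rw [← this]
    exact (v x).2
  -- kernel of π is contained in the range of d
  have hker : ∀ x : ⨁ n, β n, π' x = 0 → x ∈ d'.range := by
    intro x hx
    let mk : (⨁ n, β n) →+ (⨁ n, β n) ⧸ d'.range := QuotientAddGroup.mk' d'.range
    have hmem : ∀ (n m : ℕ) (g : n ⟶ m) (a : β n),
        DirectSum.of β n a - DirectSum.of β m (A.map g a) ∈ d'.range := by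
      intro n m g a
      have hle : n ≤ m := leOfHom g
      obtain rfl : g = homOfLE hle := Subsingleton.elim _ _
      induction m, hle using Nat.le_induction with
      | base =>
        have : (A.map (homOfLE (le_refl n))).hom a = a := by
          have : A.map (homOfLE (le_refl n)) = 𝟙 (A.obj n) := by
            rw [show homOfLE (le_refl n) = 𝟙 n from rfl, A.map_id]
          rw [this]; rfl
        rw [this, sub_self]
        exact zero_mem _
      | succ m hm ih =>
        have hsplit : DirectSum.of β n a - DirectSum.of β (m+1) (A.map (homOfLE (by omega : n ≤ m+1)) a)
            = (DirectSum.of β n a - DirectSum.of β m (A.map (homOfLE hm) a))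
              + d' (DirectSum.of β m (A.map (homOfLE hm) a)) := by
          rw [hd_apply, h_t_of]
          have : (f m) ((A.map (homOfLE hm)).hom a)
              = (A.map (homOfLE (by omega : n ≤ m+1))).hom a := by
            have : A.map (homOfLE hm) ≫ A.map (homOfLE (Nat.le_succ m))
                = A.map (homOfLE (by omega : n ≤ m+1)) := by
              rw [← A.map_comp]
              rfl
            exact ConcreteCategory.congr_hom this a
          rw [this]
          abel
        rw [hsplit]
        exact add_mem ih ⟨_, rfl⟩
    let q : Cocone A :=
      { pt := AddCommGrpCat.of ((⨁ n, β n) ⧸ d'.range)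
        ι :=
          { app := fun n => AddCommGrpCat.ofHom (mk.comp (DirectSum.of β n))
            naturality := by
              intro n m g
              ext a
              show mk (DirectSum.of β m (A.map g a)) = mk (DirectSum.of β n a)
              rw [eq_comm, ← sub_eq_zero, ← map_sub]
              exact (QuotientAddGroup.eq_zero_iff _).mpr (hmem n m g a) } }
    let u : c.pt ⟶ q.pt := hc.desc q
    have hπu : π ≫ u = AddCommGrpCat.ofHom mk := by
      apply Sext
      intro n
      rw [← Category.assoc, h_ι_π, hc.fac]
      ext a
      rfl
    have : mk x = 0 := by
      have := ConcreteCategory.congr_hom hπu x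
      have h2 : u.hom (π' x) = mk x := this
      rw [hx, map_zero] at h2
      exact h2.symm
    rwa [← QuotientAddGroup.eq_zero_iff]
  -- the splitting σ
  let b := Module.Free.chooseBasis ℤ ↥c.pt
  let σ₀ : ↥c.pt →ₗ[ℤ] (⨁ n, β n) :=
    Module.Basis.constr b ℤ (fun i => (hπ_surj (b i)).choose)
  let σ : c.pt ⟶ S := AddCommGrpCat.ofHom σ₀.toAddMonoidHom
  have hσπ : σ ≫ π = 𝟙 c.pt := by
    have hlin : π'.toIntLinearMap.comp σ₀ = LinearMap.id := by
      apply Module.Basis.ext b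
      intro i
      show π' (σ₀ (b i)) = b i
      rw [show σ₀ (b i) = (hπ_surj (b i)).choose from Module.Basis.constr_basis b ℤ _ i]
      exact (hπ_surj (b i)).choose_spec
    ext x
    exact DFunLike.congr_fun hlin x
  -- the splitting ρ
  let e := AddMonoidHom.ofInjective hd_inj
  let r : S ⟶ S := 𝟙 S - (π ≫ σ)
  have hr_mem : ∀ x : ⨁ n, β n, r.hom x ∈ d'.range := by
    intro x
    apply hker
    show π' (x - σ₀ (π' x)) = 0
    rw [map_sub]
    have : π' (σ₀ (π' x)) = π' x := ConcreteCategory.congr_hom hσπ (π' x)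
    rw [this, sub_self]
  let ρ' : (⨁ n, β n) →+ (⨁ n, β n) :=
    (e.symm.toAddMonoidHom.comp
      (AddMonoidHom.codRestrict r.hom d'.range hr_mem))
  let ρ : S ⟶ S := AddCommGrpCat.ofHom ρ'
  have key : ρ ≫ d + π ≫ σ = 𝟙 S := by
    refine AddCommGrpCat.ext fun x => ?_
    show d' (ρ' x) + σ₀ (π' x) = x
    have h1 : d' (ρ' x) = (show (⨁ n, β n) from x) - σ₀ (π' x) :=
      AddMonoidHom.apply_ofInjective_symm hd_inj _
    rw [h1]
    abel
  -- the coproduct cofan and its image under F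
  let cofan : Cofan (fun n => A.obj n) := Cofan.mk S ι
  let isc : IsColimit cofan :=
    mkCofanColimit cofan
      (fun s => AddCommGrpCat.ofHom (DirectSum.toAddMonoid fun n => (s.inj n).hom))
      (fun s n => by
        ext a
        exact DirectSum.toAddMonoid_of (fun n => (s.inj n).hom) n a)
      (fun s m hm => by
        apply AddCommGrpCat.hom_ext
        apply DirectSum.addHom_ext'
        intro n
        ext a
        have h1 := ConcreteCategory.congr_hom (hm n) a
        have h2 : (DirectSum.toAddMonoid fun n => (s.inj n).hom)
            (DirectSum.of β n a) = s.inj n a :=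
          DirectSum.toAddMonoid_of (fun n => (s.inj n).hom) n a
        exact h1.trans h2.symm)
  have := hF ℕ
  let iscF : IsColimit (F.mapCocone cofan) := isColimitOfPreserves F isc
  -- extensionality and descent in C
  have hFext : ∀ {X : C} (g h : F.obj S ⟶ X),
      (∀ n, F.map (ι n) ≫ g = F.map (ι n) ≫ h) → g = h := by
    intro X g h H
    apply iscF.hom_ext
    rintro ⟨n⟩
    exact H n
  -- the descent data for an arbitrary cocone s over A ⋙ F
  refine ⟨?_⟩
  have step : ∀ s : Cocone (A ⋙ F),
      ∃ fs : F.obj S ⟶ s.pt, ∀ n, F.map (ι n) ≫ fs = s.ι.app n := by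
    intro s
    let cc : Cocone (Discrete.functor (fun n => A.obj n) ⋙ F) :=
      { pt := s.pt
        ι := Discrete.natTrans fun n => s.ι.app n.as }
    exact ⟨iscF.desc cc, fun n => iscF.fac cc ⟨n⟩⟩
  choose fs hfs using step
  have hdfs : ∀ s : Cocone (A ⋙ F), F.map d ≫ fs s = 0 := by
    intro s
    apply hFext
    intro n
    rw [← Category.assoc, ← F.map_comp, h_ι_d, F.map_sub, F.map_comp, Preadditive.sub_comp,
      Category.assoc, hfs, hfs, comp_zero]
    have := s.w (homOfLE (Nat.le_succ n))
    rw [sub_eq_zero]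
    exact this.symm
  refine IsColimit.mk (fun s => F.map σ ≫ fs s) ?_ ?_
  · intro s n
    have : (F.mapCocone c).ι.app n = F.map (c.ι.app n) := rfl
    rw [this, ← h_ι_π n, F.map_comp, Category.assoc, ← Category.assoc (F.map π),
      ← F.map_comp]
    have hπσ : π ≫ σ = 𝟙 S - ρ ≫ d := by rw [← key]; abel
    rw [hπσ, F.map_sub, F.map_id, F.map_comp, Preadditive.sub_comp, Category.id_comp,
      Category.assoc, hdfs, comp_zero, sub_zero, hfs]
  · intro s m hm
    have h2 : F.map π ≫ m = fs s := by
      apply hFext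
      intro n
      rw [← Category.assoc, ← F.map_comp, h_ι_π, hfs]
      exact hm n
    show m = F.map σ ≫ fs s
    rw [← h2, ← Category.assoc, ← F.map_comp, hσπ, F.map_id, Category.id_comp]
end
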